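/- arXiv:0810.5109 — 5 statements merged into one kernel-verified Lean document; each statement's English description precedes it below -/
import Mathlib

section
/- For every n ≥ 1 and every unit vector x ∈ ℂⁿ, equality Σ_{1≤j<l≤n} (2·Re(conj(x_j)·x_l))² = 2 − 2/n holds if and only if there exist a complex number c with |c| = 1 and a proper state y ∈ ℂⁿ such that x = c·y; equivalently, if and only if there is θ ∈ ℝ with x_j² = e^{iθ}/n for every j. -/
lemma pair_id (a b : ℂ) :
    (2 * ((starRingEnd ℂ) a * b).re) ^ 2
      = 2 * ((starRingEnd ℂ) (a ^ 2) * (b ^ 2)).re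
        + 2 * (‖a‖ ^ 2 * (‖b‖ ^ 2)) := by
  rw [Complex.sq_norm, Complex.sq_norm]
  simp [Complex.mul_re, Complex.normSq_apply, pow_two, Complex.mul_im]
  ring

lemma sum_re_conj (n : ℕ) (z : Fin n → ℂ) :
    ∑ j : Fin n, ∑ l : Fin n, ((starRingEnd ℂ) (z j) * z l).re
      = ‖∑ j : Fin n, z j‖ ^ 2 := by
  have h : ∑ j : Fin n, ∑ l : Fin n, ((starRingEnd ℂ) (z j) * z l).re
      = ((starRingEnd ℂ) (∑ j : Fin n, z j) * (∑ l : Fin n, z l)).re := by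
    rw [map_sum, Finset.sum_mul]
    rw [Complex.re_sum]
    refine Finset.sum_congr rfl fun j _ => ?_
    rw [Finset.mul_sum, Complex.re_sum]
  rw [h, Complex.sq_norm, ← Complex.normSq_eq_conj_mul_self, Complex.ofReal_re]

lemma key_id (n : ℕ) (x : Fin n → ℂ) :
    (∑ j : Fin n, ∑ l : Fin n,
        (if j < l then (2 * ((starRingEnd ℂ) (x j) * x l).re) ^ 2 else 0))
      = (‖∑ j : Fin n, (x j) ^ 2‖ ^ 2
          + (∑ j : Fin n, ‖x j‖ ^ 2) ^ 2
          - 2 * ∑ j : Fin n, ‖x j‖ ^ 4) := by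
  set f : Fin n → Fin n → ℝ :=
    fun j l => (2 * ((starRingEnd ℂ) (x j) * x l).re) ^ 2 with hf
  have hre : ∀ j l : Fin n, ((starRingEnd ℂ) (x j) * x l).re
      = ((starRingEnd ℂ) (x l) * x j).re := by
    intro j l
    rw [← Complex.conj_re ((starRingEnd ℂ) (x j) * x l), map_mul, Complex.conj_conj,
      mul_comm (x j)]
  have hsymm : ∀ j l, f j l = f l j := by
    intro j l
    simp only [hf, hre j l]
  have htot : ∑ j : Fin n, ∑ l : Fin n, f j l
      = 2 * (∑ j : Fin n, ∑ l : Fin n, (if j < l then f j l else 0))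
        + ∑ j : Fin n, f j j := by
    have key : ∀ j l : Fin n, f j l
        = (if j < l then f j l else 0) + (if l < j then f l j else 0)
          + (if j = l then f j j else 0) := by
      intro j l
      rcases lt_trichotomy j l with h | h | h
      · simp [h, not_lt.mpr h.le, h.ne]
      · simp [h]
      · simp [h, not_lt.mpr h.le, h.ne', hsymm j l]
    calc ∑ j : Fin n, ∑ l : Fin n, f j l
        = ∑ j : Fin n, ∑ l : Fin n,
            ((if j < l then f j l else 0) + (if l < j then f l j else 0)
              + (if j = l then f j j else 0)) := by
          refine Finset.sum_congr rfl fun j _ => Finset.sum_congr rfl fun l _ => key j l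
      _ = (∑ j : Fin n, ∑ l : Fin n, (if j < l then f j l else 0))
          + (∑ j : Fin n, ∑ l : Fin n, (if l < j then f l j else 0))
          + ∑ j : Fin n, ∑ l : Fin n, (if j = l then f j j else 0) := by
          simp [Finset.sum_add_distrib]
      _ = 2 * (∑ j : Fin n, ∑ l : Fin n, (if j < l then f j l else 0))
          + ∑ j : Fin n, f j j := by
          rw [Finset.sum_comm (f := fun j l => if l < j then f l j else 0)]
          have h3 : ∑ j : Fin n, ∑ l : Fin n, (if j = l then f j j else 0)
              = ∑ j : Fin n, f j j := by
            refine Finset.sum_congr rfl fun j _ => ?_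
            simp
          rw [h3]; ring
  have hpair : ∀ j l, f j l
      = 2 * ((starRingEnd ℂ) ((x j) ^ 2) * ((x l) ^ 2)).re
        + 2 * (‖x j‖ ^ 2 * (‖x l‖ ^ 2)) :=
    fun j l => pair_id (x j) (x l)
  have h1 : ∑ j : Fin n, ∑ l : Fin n, f j l
      = 2 * ‖∑ j : Fin n, (x j) ^ 2‖ ^ 2
        + 2 * (∑ j : Fin n, ‖x j‖ ^ 2) ^ 2 := by
    have split : ∑ j : Fin n, ∑ l : Fin n, f j l
        = 2 * (∑ j : Fin n, ∑ l : Fin n,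
            ((starRingEnd ℂ) ((x j) ^ 2) * ((x l) ^ 2)).re)
          + 2 * (∑ j : Fin n, ∑ l : Fin n,
            ‖x j‖ ^ 2 * (‖x l‖ ^ 2)) := by
      simp only [hpair, Finset.sum_add_distrib, ← Finset.mul_sum]
    rw [split, sum_re_conj n (fun j => (x j) ^ 2), ← Finset.sum_mul_sum, ← pow_two]
  have hd : ∑ j : Fin n, f j j = 4 * ∑ j : Fin n, ‖x j‖ ^ 4 := by
    rw [Finset.mul_sum]
    refine Finset.sum_congr rfl fun j _ => ?_
    have h0 : ((starRingEnd ℂ) (x j) * x j).re = ‖x j‖ ^ 2 := by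
      rw [← Complex.normSq_eq_conj_mul_self, Complex.ofReal_re, Complex.sq_norm]
    simp only [hf, h0]
    ring
  have ht := htot
  rw [h1, hd] at ht
  show (∑ j : Fin n, ∑ l : Fin n, (if j < l then f j l else 0)) = _
  linarith

lemma all_eq (n : ℕ) (hn : 1 ≤ n) (a : Fin n → ℝ) (h1 : ∑ j : Fin n, a j = 1)
    (h2 : ∑ j : Fin n, (a j) ^ 2 = 1 / n) : ∀ j, a j = 1 / n := by
  have hn0 : (0 : ℝ) < n := by exact_mod_cast hn
  have hz : ∑ j : Fin n, (a j - 1 / n) ^ 2 = 0 := by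
    have e : ∀ j : Fin n, (a j - 1 / n) ^ 2
        = (a j) ^ 2 - (2 / n) * a j + 1 / (n : ℝ) ^ 2 := by
      intro j; field_simp; ring
    calc ∑ j : Fin n, (a j - 1 / n) ^ 2
        = ∑ j : Fin n, ((a j) ^ 2 - (2 / n) * a j + 1 / (n : ℝ) ^ 2) :=
          Finset.sum_congr rfl fun j _ => e j
      _ = (∑ j : Fin n, (a j) ^ 2) - (2 / n) * (∑ j : Fin n, a j)
          + (n : ℝ) * (1 / (n : ℝ) ^ 2) := by
          rw [Finset.sum_add_distrib, Finset.sum_sub_distrib, ← Finset.mul_sum,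
            Finset.sum_const, Finset.card_univ, Fintype.card_fin, nsmul_eq_mul]
      _ = 0 := by rw [h1, h2]; field_simp; ring
  intro j
  have := (Finset.sum_eq_zero_iff_of_nonneg (fun i _ => sq_nonneg _)).1 hz j
    (Finset.mem_univ j)
  have := sq_eq_zero_iff.1 this
  linarith

lemma aligned (n : ℕ) (hn : 1 ≤ n) (z : Fin n → ℂ)
    (hb : ∀ j, ‖z j‖ = 1 / n)
    (hs : ‖∑ j : Fin n, z j‖ = 1) :
    ∀ j, z j = (∑ i : Fin n, z i) / n := by
  have hn0 : (0 : ℝ) < n := by exact_mod_cast hn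
  set u : ℂ := ∑ i : Fin n, z i with hu
  have hsum : ∑ j : Fin n, ((starRingEnd ℂ) u * z j).re = 1 := by
    rw [← Complex.re_sum, ← Finset.mul_sum, ← hu,
      ← Complex.normSq_eq_conj_mul_self, Complex.ofReal_re,
      ← Complex.sq_norm, hs, one_pow]
  have hle : ∀ j : Fin n, ((starRingEnd ℂ) u * z j).re ≤ 1 / n := by
    intro j
    calc ((starRingEnd ℂ) u * z j).re ≤ ‖(starRingEnd ℂ) u * z j‖ :=
          Complex.re_le_norm _
      _ = 1 / n := by rw [norm_mul, Complex.norm_conj, hs, hb j, one_mul]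
  have hconst : ∑ _j : Fin n, (1 / (n : ℝ)) = 1 := by
    rw [Finset.sum_const, Finset.card_univ, Fintype.card_fin, nsmul_eq_mul]
    field_simp
  have heq : ∀ j : Fin n, ((starRingEnd ℂ) u * z j).re = 1 / n := by
    have := (Finset.sum_eq_sum_iff_of_le (s := Finset.univ)
      (f := fun j => ((starRingEnd ℂ) u * z j).re)
      (g := fun _ => (1 / (n : ℝ))) (fun i _ => hle i)).1 (by rw [hsum, hconst])
    exact fun j => this j (Finset.mem_univ j)
  intro j
  have habs : ‖(starRingEnd ℂ) u * z j‖ = 1 / n := by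
    rw [norm_mul, Complex.norm_conj, hs, hb j, one_mul]
  have him : ((starRingEnd ℂ) u * z j).im = 0 := by
    have h1 : Complex.normSq ((starRingEnd ℂ) u * z j) = (1 / n) ^ 2 := by
      rw [← Complex.sq_norm, habs]
    rw [Complex.normSq_apply, heq j] at h1
    nlinarith [sq_nonneg (((starRingEnd ℂ) u * z j).im)]
  have hw : (starRingEnd ℂ) u * z j = ((1 / (n : ℝ) : ℝ) : ℂ) := by
    apply Complex.ext
    · rw [heq j, Complex.ofReal_re]
    · rw [him, Complex.ofReal_im]
  have huu : u * (starRingEnd ℂ) u = 1 := by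
    rw [Complex.mul_conj, ← Complex.sq_norm, hs]
    norm_num
  calc z j = (u * (starRingEnd ℂ) u) * z j := by rw [huu, one_mul]
    _ = u * ((starRingEnd ℂ) u * z j) := by ring
    _ = u * ((1 / (n : ℝ) : ℝ) : ℂ) := by rw [hw]
    _ = u / n := by push_cast; ring

/-- For a unit vector `x ∈ ℂⁿ`, equality `∑_{j<l} (2·Re(conj(x_j)·x_l))² = 2 − 2/n` holds
iff `x = c • y` for a unimodular `c` and a proper state `y` (all coordinates `±1/√n`);
equivalently, iff there is `θ ∈ ℝ` with `x_j² = e^{iθ}/n` for every `j`. -/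
theorem stmt_3 (n : ℕ) (hn : 1 ≤ n) (x : Fin n → ℂ)
    (hx : ∑ j : Fin n, ‖x j‖ ^ 2 = 1) :
    ((∑ j : Fin n, ∑ l : Fin n,
        (if j < l then (2 * ((starRingEnd ℂ) (x j) * x l).re) ^ 2 else 0))
        = 2 - 2 / (n : ℝ)
      ↔ ∃ (c : ℂ) (y : Fin n → ℂ), ‖c‖ = 1 ∧
          (∀ j, y j = ((Real.sqrt n)⁻¹ : ℝ) ∨ y j = -((Real.sqrt n)⁻¹ : ℝ)) ∧
          x = c • y)
    ∧
    ((∑ j : Fin n, ∑ l : Fin n,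
        (if j < l then (2 * ((starRingEnd ℂ) (x j) * x l).re) ^ 2 else 0))
        = 2 - 2 / (n : ℝ)
      ↔ ∃ θ : ℝ, ∀ j, (x j) ^ 2 = Complex.exp (θ * Complex.I) / n) := by
  have hn0 : (0 : ℝ) < n := by exact_mod_cast hn
  have hn0' : (n : ℝ) ≠ 0 := ne_of_gt hn0
  have hnC : (n : ℂ) ≠ 0 := Nat.cast_ne_zero.mpr (by omega)
  -- second iff
  have hA : (∑ j : Fin n, ∑ l : Fin n,
        (if j < l then (2 * ((starRingEnd ℂ) (x j) * x l).re) ^ 2 else 0))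
        = 2 - 2 / (n : ℝ)
      ↔ ∃ θ : ℝ, ∀ j, (x j) ^ 2 = Complex.exp (θ * Complex.I) / n := by
    rw [key_id, hx]
    have hpow : ∀ j, ‖(x j) ^ 2‖ = ‖x j‖ ^ 2 :=
      fun j => norm_pow (x j) 2
    constructor
    · intro h
      set A := ‖∑ j : Fin n, (x j) ^ 2‖ with hAdef
      set C := ∑ j : Fin n, ‖x j‖ ^ 4 with hCdef
      have hCge : (1 : ℝ) / n ≤ C := by
        have hcs := sq_sum_le_card_mul_sum_sq
          (s := (Finset.univ : Finset (Fin n))) (f := fun j => ‖x j‖ ^ 2)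
        rw [hx, one_pow, Finset.card_univ, Fintype.card_fin] at hcs
        have he : ∑ j : Fin n, (‖x j‖ ^ 2) ^ 2 = C := by
          rw [hCdef]
          exact Finset.sum_congr rfl fun j _ => by ring
        rw [he] at hcs
        rw [div_le_iff₀ hn0]
        linarith
      have hAle : A ≤ 1 := by
        calc A ≤ ∑ j : Fin n, ‖(x j) ^ 2‖ :=
              norm_sum_le _ _
          _ = 1 := by rw [Finset.sum_congr rfl fun j _ => hpow j, hx]
      have hA0 : 0 ≤ A := norm_nonneg _
      have hA2 : A ^ 2 ≤ 1 := by nlinarith [mul_le_mul hAle hAle hA0 zero_le_one]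
      have h2n : 2 / (n : ℝ) = 2 * (1 / n) := by ring
      rw [h2n] at h
      have hC1 : C = 1 / n := by linarith
      have hAsq : A ^ 2 = 1 := by linarith
      have hA1 : A = 1 := by nlinarith [mul_le_mul_of_nonneg_left hAle hA0]
      -- each |x_j|² = 1/n
      have hbj : ∀ j, ‖(x j) ^ 2‖ = 1 / n := by
        have h2 : ∑ j : Fin n, (‖x j‖ ^ 2) ^ 2 = 1 / n := by
          rw [← hC1, hCdef]
          exact Finset.sum_congr rfl fun j _ => by ring
        intro j
        rw [hpow j]
        exact all_eq n hn (fun j => ‖x j‖ ^ 2) hx h2 j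
      have halig := aligned n hn (fun j => (x j) ^ 2) hbj hA1
      set u : ℂ := ∑ i : Fin n, (x i) ^ 2 with hu
      refine ⟨Complex.arg u, fun j => ?_⟩
      have hexp : Complex.exp ((Complex.arg u : ℝ) * Complex.I) = u := by
        have := Complex.norm_mul_exp_arg_mul_I u
        rw [show ‖u‖ = 1 from hA1] at this
        simpa using this
      rw [hexp]
      exact halig j
    · rintro ⟨θ, hθ⟩
      have habs2 : ∀ j, ‖x j‖ ^ 2 = 1 / n := by
        intro j
        rw [← hpow j, hθ j, norm_div, Complex.norm_exp_ofReal_mul_I]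
        simp
      have hsum : ∑ j : Fin n, (x j) ^ 2 = Complex.exp (θ * Complex.I) := by
        rw [Finset.sum_congr rfl fun j _ => hθ j, Finset.sum_const, Finset.card_univ,
          Fintype.card_fin, nsmul_eq_mul]
        rw [mul_div_assoc', mul_comm (n : ℂ) _, mul_div_assoc, div_self hnC, mul_one]
      have hC : ∑ j : Fin n, ‖x j‖ ^ 4 = 1 / n := by
        have hterm : ∀ j : Fin n, ‖x j‖ ^ 4 = 1 / (n : ℝ) ^ 2 := by
          intro j
          have h4 : ‖x j‖ ^ 4 = (‖x j‖ ^ 2) ^ 2 := by ring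
          rw [h4, habs2 j, div_pow, one_pow]
        rw [Finset.sum_congr rfl fun j _ => hterm j, Finset.sum_const, Finset.card_univ,
          Fintype.card_fin, nsmul_eq_mul]
        field_simp
      rw [hsum, Complex.norm_exp_ofReal_mul_I, hC]
      ring
  -- equivalence between the two existence statements
  have hB : (∃ θ : ℝ, ∀ j, (x j) ^ 2 = Complex.exp (θ * Complex.I) / n)
      ↔ ∃ (c : ℂ) (y : Fin n → ℂ), ‖c‖ = 1 ∧
          (∀ j, y j = ((Real.sqrt n)⁻¹ : ℝ) ∨ y j = -((Real.sqrt n)⁻¹ : ℝ)) ∧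
          x = c • y := by
    have hsqrt : ((Real.sqrt n : ℝ) : ℂ) ^ 2 = (n : ℂ) := by
      rw [← Complex.ofReal_pow, Real.sq_sqrt (le_of_lt hn0)]
      norm_cast
    have hr : (((Real.sqrt n)⁻¹ : ℝ) : ℂ) ^ 2 = 1 / (n : ℂ) := by
      push_cast
      rw [inv_pow, hsqrt]
      exact (one_div _).symm
    constructor
    · rintro ⟨θ, hθ⟩
      set c : ℂ := Complex.exp ((θ / 2 : ℝ) * Complex.I) with hc
      have hc0 : c ≠ 0 := Complex.exp_ne_zero _
      have hcsq : c ^ 2 = Complex.exp ((θ : ℝ) * Complex.I) := by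
        have hsp : ((θ : ℝ) : ℂ) * Complex.I
            = ((θ / 2 : ℝ) : ℂ) * Complex.I + ((θ / 2 : ℝ) : ℂ) * Complex.I := by
          push_cast; ring
        rw [hsp, Complex.exp_add, hc]; ring
      refine ⟨c, fun j => x j / c, Complex.norm_exp_ofReal_mul_I _, ?_, ?_⟩
      · intro j
        have hy2 : (x j / c) ^ 2 = 1 / (n : ℂ) := by
          rw [div_pow, hθ j, hcsq, div_right_comm, div_self (Complex.exp_ne_zero _)]
        have hfac : (x j / c - (((Real.sqrt n)⁻¹ : ℝ) : ℂ))
            * (x j / c + (((Real.sqrt n)⁻¹ : ℝ) : ℂ)) = 0 := by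
          calc (x j / c - (((Real.sqrt n)⁻¹ : ℝ) : ℂ))
              * (x j / c + (((Real.sqrt n)⁻¹ : ℝ) : ℂ))
              = (x j / c) ^ 2 - (((Real.sqrt n)⁻¹ : ℝ) : ℂ) ^ 2 := by ring
            _ = 0 := by rw [hy2, hr]; ring
        rcases mul_eq_zero.1 hfac with h | h
        · exact Or.inl (sub_eq_zero.1 h)
        · refine Or.inr ?_
          have : x j / c = -(((Real.sqrt n)⁻¹ : ℝ) : ℂ) := by linear_combination h
          exact this
      · funext j
        simp only [Pi.smul_apply, smul_eq_mul]
        field_simp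
    · rintro ⟨c, y, hc1, hy, hxy⟩
      have hc0 : c ≠ 0 := by
        intro hcc
        rw [hcc] at hc1
        simp at hc1
      refine ⟨2 * Complex.arg c, fun j => ?_⟩
      have hy2 : (y j) ^ 2 = 1 / (n : ℂ) := by
        rcases hy j with h | h
        · rw [h]; exact hr
        · rw [h, neg_sq]; exact hr
      have habs := Complex.norm_mul_exp_arg_mul_I c
      rw [hc1] at habs
      simp only [Complex.ofReal_one, one_mul] at habs
      have hcsq : c ^ 2 = Complex.exp (((2 * Complex.arg c : ℝ) : ℂ) * Complex.I) := by
        have hsp : ((2 * Complex.arg c : ℝ) : ℂ) * Complex.I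
            = ((Complex.arg c : ℝ) : ℂ) * Complex.I
              + ((Complex.arg c : ℝ) : ℂ) * Complex.I := by
          push_cast; ring
        rw [hsp, Complex.exp_add, habs]; ring
      rw [hxy]
      simp only [Pi.smul_apply, smul_eq_mul]
      rw [mul_pow, hy2, hcsq]
      ring
  exact ⟨hA.trans hB, hA⟩
end

section
/- For every constant ε > 0 there exists N such that for all n ≥ N the following holds: if x ∈ ℂⁿ is a unit vector with Σ_{1≤j<l≤n} (2·Re(conj(x_j)·x_l))² ≥ 2 − 2/n − n^{−(2+ε)}, then there exists a proper state y ∈ ℂⁿ with √(1 − |⟨y, x⟩|²) ≤ 5·n^{−ε/4}. (The quantity √(1 − |⟨y,x⟩|²) is the trace distance between the pure states |x⟩⟨x| and |y⟩⟨y|.) -/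
set_option maxHeartbeats 1000000 in
/-- For every `ε > 0` there is `N` such that for all `n ≥ N`: every unit vector `x ∈ ℂⁿ`
with `∑_{j<l} (2·Re(conj(x_j)·x_l))² ≥ 2 − 2/n − n^{−(2+ε)}` is within trace distance
`5·n^{−ε/4}` of a proper state `y`, i.e. `√(1 − |⟨y,x⟩|²) ≤ 5·n^{−ε/4}`. -/
theorem stmt_4 (ε : ℝ) (hε : 0 < ε) :
    ∃ N : ℕ, ∀ n : ℕ, N ≤ n → ∀ x : Fin n → ℂ,
      (∑ j : Fin n, ‖x j‖ ^ 2 = 1) →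
      (2 - 2 / n - (n : ℝ) ^ (-(2 + ε)) ≤
        ∑ j : Fin n, ∑ l : Fin n,
          (if j < l then (2 * ((starRingEnd ℂ) (x j) * x l).re) ^ 2 else 0)) →
      ∃ y : Fin n → ℂ,
        (∀ j, y j = ((Real.sqrt n)⁻¹ : ℝ) ∨ y j = -((Real.sqrt n)⁻¹ : ℝ)) ∧
        Real.sqrt (1 - ‖∑ j : Fin n, (starRingEnd ℂ) (y j) * x j‖ ^ 2)
          ≤ 5 * (n : ℝ) ^ (-(ε / 4)) := by
  refine ⟨2, fun n hn x hx hS => ?_⟩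
  have hn2 : (2:ℝ) ≤ n := by exact_mod_cast hn
  have hn1 : (1:ℝ) ≤ n := by linarith
  have hn0 : (0:ℝ) < n := by linarith
  have h2n : 2 / (n:ℝ) = 2 * (1 / (n:ℝ)) := by ring
  set δ : ℝ := (n:ℝ) ^ (-(2+ε)) with hδdef
  have hδpos : 0 < δ := Real.rpow_pos_of_pos hn0 _
  have hδlt1 : δ < 1 := Real.rpow_lt_one_of_one_lt_of_neg (by linarith) (by linarith)
  have hnd : (n:ℝ) * δ = (n:ℝ) ^ (-(1+ε)) := by
    rw [hδdef]
    nth_rewrite 1 [← Real.rpow_one (n:ℝ)]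
    rw [← Real.rpow_add hn0]
    congr 1
    ring
  have hnδ1 : (n:ℝ) * δ ≤ 1 := by
    rw [hnd]
    exact Real.rpow_le_one_of_one_le_of_nonpos hn1 (by linarith)
  -- real and imaginary parts
  set a : Fin n → ℝ := fun j => (x j).re with ha
  set b : Fin n → ℝ := fun j => (x j).im with hb
  set A : ℝ := ∑ j, a j ^ 2 with hA
  set B : ℝ := ∑ j, b j ^ 2 with hB
  set P : ℝ := ∑ j, a j * b j with hP
  set Q : ℝ := ∑ j, (a j ^ 2 + b j ^ 2) ^ 2 with hQ
  have habs2 : ∀ j, ‖x j‖ ^ 2 = a j ^ 2 + b j ^ 2 := fun j => by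
    rw [Complex.sq_norm, Complex.normSq_apply]; ring
  have hAB1 : A + B = 1 := by
    rw [hA, hB, ← Finset.sum_add_distrib, ← hx]
    exact Finset.sum_congr rfl fun j _ => (habs2 j).symm
  have hre : ∀ j l, ((starRingEnd ℂ) (x j) * x l).re = a j * a l + b j * b l := fun j l => by
    simp [Complex.mul_re, ha, hb]
  set f : Fin n → Fin n → ℝ := fun j l => (2 * ((starRingEnd ℂ) (x j) * x l).re) ^ 2 with hf
  have hfval : ∀ j l, f j l = (2 * (a j * a l + b j * b l)) ^ 2 := fun j l => by
    rw [hf]; dsimp only; rw [hre]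
  -- total sum
  have htot : ∑ j, ∑ l, f j l = 4 * (A * A + B * B + 2 * (P * P)) := by
    have inner : ∀ j : Fin n, ∑ l, f j l
        = (4 * a j ^ 2) * A + (8 * (a j * b j)) * P + (4 * b j ^ 2) * B := by
      intro j
      have e : ∀ l : Fin n, f j l
          = (4 * a j ^ 2) * a l ^ 2 + (8 * (a j * b j)) * (a l * b l) + (4 * b j ^ 2) * b l ^ 2 :=
        fun l => by rw [hfval]; ring
      rw [Finset.sum_congr rfl fun l _ => e l]
      rw [Finset.sum_add_distrib, Finset.sum_add_distrib, ← Finset.mul_sum, ← Finset.mul_sum,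
        ← Finset.mul_sum, ← hA, ← hP, ← hB]
    rw [Finset.sum_congr rfl fun j _ => inner j]
    rw [Finset.sum_add_distrib, Finset.sum_add_distrib]
    have e1 : ∑ j, (4 * a j ^ 2) * A = (4 * A) * A := by
      rw [← Finset.sum_mul]; rw [show ∑ j, 4 * a j ^ 2 = 4 * A by rw [hA, Finset.mul_sum]]
    have e2 : ∑ j, (8 * (a j * b j)) * P = (8 * P) * P := by
      rw [← Finset.sum_mul]; rw [show ∑ j, 8 * (a j * b j) = 8 * P by rw [hP, Finset.mul_sum]]
    have e3 : ∑ j, (4 * b j ^ 2) * B = (4 * B) * B := by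
      rw [← Finset.sum_mul]; rw [show ∑ j, 4 * b j ^ 2 = 4 * B by rw [hB, Finset.mul_sum]]
    rw [e1, e2, e3]; ring
  have hdiag : ∑ j, f j j = 4 * Q := by
    rw [hQ, Finset.mul_sum]
    exact Finset.sum_congr rfl fun j _ => by rw [hfval]; ring
  have hsym : ∀ j l, f j l = f l j := fun j l => by rw [hfval, hfval]; ring
  -- splitting the double sum
  have hsplit : ∑ j, ∑ l, f j l
      = 2 * (∑ j : Fin n, ∑ l : Fin n, if j < l then f j l else 0) + ∑ j, f j j := by
    have key : ∀ j l : Fin n, f j l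
        = (if j < l then f j l else 0) + (if l < j then f j l else 0)
          + (if j = l then f j l else 0) := by
      intro j l
      rcases lt_trichotomy j l with h | h | h
      · simp [h, asymm h, ne_of_lt h]
      · simp [h, lt_irrefl]
      · simp [h, asymm h, (ne_of_gt h).symm, ne_of_gt h]
    calc ∑ j, ∑ l, f j l
        = ∑ j : Fin n, ∑ l : Fin n, ((if j < l then f j l else 0) + (if l < j then f j l else 0)
            + (if j = l then f j l else 0)) := by
          exact Finset.sum_congr rfl fun j _ => Finset.sum_congr rfl fun l _ => key j l
      _ = (∑ j : Fin n, ∑ l : Fin n, if j < l then f j l else 0)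
            + (∑ j : Fin n, ∑ l : Fin n, if l < j then f j l else 0)
            + (∑ j : Fin n, ∑ l : Fin n, if j = l then f j l else 0) := by
          simp_rw [Finset.sum_add_distrib]
      _ = 2 * (∑ j : Fin n, ∑ l : Fin n, if j < l then f j l else 0) + ∑ j, f j j := by
          have e1 : (∑ j : Fin n, ∑ l : Fin n, if l < j then f j l else 0)
              = ∑ j : Fin n, ∑ l : Fin n, if j < l then f j l else 0 := by
            rw [Finset.sum_comm]
            exact Finset.sum_congr rfl fun j _ => Finset.sum_congr rfl fun l _ => by
              rw [hsym]
          have e2 : (∑ j : Fin n, ∑ l : Fin n, if j = l then f j l else 0) = ∑ j, f j j := by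
            exact Finset.sum_congr rfl fun j _ => by simp
          rw [e1, e2]; ring
  have hS' : 2 - 2 / n - δ ≤ 2 * (A * A + B * B + 2 * (P * P)) - 2 * Q := by
    have : (∑ j : Fin n, ∑ l : Fin n, if j < l then f j l else 0)
        = 2 * (A * A + B * B + 2 * (P * P)) - 2 * Q := by linarith [hsplit, htot, hdiag]
    calc 2 - 2 / n - δ ≤ ∑ j : Fin n, ∑ l : Fin n, if j < l then f j l else 0 := hS
      _ = _ := this
  -- Cauchy-Schwarz facts
  have hQn : (1:ℝ) ≤ n * Q := by
    have h := sq_sum_le_card_mul_sum_sq (s := Finset.univ)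
      (f := fun j : Fin n => a j ^ 2 + b j ^ 2)
    rw [Finset.sum_add_distrib, ← hA, ← hB, hAB1] at h
    simpa using h
  have hPAB : P ^ 2 ≤ A * B := by
    have h := Finset.sum_mul_sq_le_sq_mul_sq Finset.univ a b
    rw [← hA, ← hB, ← hP] at h
    exact h
  -- μ and m
  set μ : ℂ := ∑ j, (x j) ^ 2 with hμ
  have hμre : μ.re = A - B := by
    rw [hμ, Complex.re_sum, hA, hB, ← Finset.sum_sub_distrib]
    exact Finset.sum_congr rfl fun j _ => by
      rw [sq, Complex.mul_re]; ring
  have hμim : μ.im = 2 * P := by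
    rw [hμ, Complex.im_sum, hP, Finset.mul_sum]
    exact Finset.sum_congr rfl fun j _ => by
      rw [sq, Complex.mul_im]; ring
  set m : ℝ := ‖μ‖ with hm
  have hm0 : 0 ≤ m := norm_nonneg μ
  have hm2 : m ^ 2 = (A - B) ^ 2 + (2 * P) ^ 2 := by
    rw [hm, Complex.sq_norm, Complex.normSq_apply, hμre, hμim]; ring
  have hABsq : (A + B) ^ 2 = 1 := by rw [hAB1]; norm_num
  have hm2le : m ^ 2 ≤ 1 := by
    have e : (A + B) ^ 2 = (A - B) ^ 2 + 4 * (A * B) := by ring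
    linarith [hm2, hPAB, hABsq, e]
  have hQge : 1 / (n:ℝ) ≤ Q := by
    rw [div_le_iff₀ hn0]; linarith [hQn]
  have hident : 2 * (A * A + B * B + 2 * (P * P)) = m ^ 2 + (A + B) ^ 2 := by
    rw [hm2]; ring
  have hS'' : 2 - 2 / (n:ℝ) - δ ≤ m ^ 2 + 1 - 2 * Q := by
    rw [hident, hAB1] at hS'; rw [one_pow] at hS'; exact hS'
  have hm2ge : 1 - δ ≤ m ^ 2 := by linarith [hS'', hQge, h2n]
  have hm1 : m ≤ 1 := by
    by_contra h
    push_neg at h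
    exact absurd hm2le (not_le.mpr (one_lt_pow₀ h two_ne_zero))
  have hmge : 1 - δ ≤ m := by
    have e : m ^ 2 = m * m := sq m
    have h2 : m * m ≤ m * 1 := mul_le_mul_of_nonneg_left hm1 hm0
    linarith [hm2ge]
  have hmpos : 0 < m := by linarith
  have hμ0 : (m:ℂ) ≠ 0 := by
    simp only [ne_eq, Complex.ofReal_eq_zero]; linarith
  -- the phase
  obtain ⟨φ, hφ⟩ := IsAlgClosed.exists_pow_nat_eq ((starRingEnd ℂ) μ / (m:ℂ)) zero_lt_two
  have habsφ : ‖φ‖ = 1 := by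
    have h2 : ‖φ‖ ^ 2 = 1 := by
      rw [← norm_pow, hφ, norm_div, Complex.norm_conj, Complex.norm_real, Real.norm_eq_abs, abs_of_nonneg hm0,
        ← hm, div_self (by linarith)]
    have h0 := norm_nonneg φ
    have e : ‖φ‖ ^ 2 = ‖φ‖ * ‖φ‖ := sq _
    by_contra hne
    rcases lt_or_gt_of_ne hne with hlt | hgt
    · have hm := mul_le_mul_of_nonneg_left hlt.le h0
      rw [mul_one] at hm
      linarith [h2, e]
    · exact absurd h2 (ne_of_gt (one_lt_pow₀ hgt two_ne_zero))
  have hnsφ : Complex.normSq φ = 1 := by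
    rw [← Complex.sq_norm, habsφ]; norm_num
  set u : Fin n → ℝ := fun j => (φ * x j).re with hu
  set v : Fin n → ℝ := fun j => (φ * x j).im with hv
  have hw2 : ∀ j, u j ^ 2 + v j ^ 2 = a j ^ 2 + b j ^ 2 := by
    intro j
    have h1 : Complex.normSq (φ * x j) = Complex.normSq (x j) := by
      rw [map_mul, hnsφ, one_mul]
    rw [Complex.normSq_apply, Complex.normSq_apply] at h1
    simp only [hu, hv, ha, hb, pow_two]
    linarith [h1]
  set U : ℝ := ∑ j, u j ^ 2 with hU
  set V : ℝ := ∑ j, v j ^ 2 with hV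
  have hUV1 : U + V = 1 := by
    have e : ∑ j, (a j ^ 2 + b j ^ 2) = A + B := by
      rw [hA, hB, Finset.sum_add_distrib]
    rw [hU, hV, ← Finset.sum_add_distrib, Finset.sum_congr rfl fun j _ => hw2 j, e, hAB1]
  have hφ2μ : φ ^ 2 * μ = (m:ℂ) := by
    rw [hφ, div_mul_eq_mul_div, mul_comm ((starRingEnd ℂ) μ) μ, Complex.mul_conj]
    rw [show ((Complex.normSq μ : ℝ) : ℂ) = (m:ℂ) ^ 2 by
      rw [← Complex.sq_norm, ← hm]; push_cast; ring]
    rw [sq, mul_div_assoc, div_self hμ0, mul_one]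
  have hUVm : U - V = m := by
    have h1 : ∀ j, u j ^ 2 - v j ^ 2 = ((φ * x j) ^ 2).re := by
      intro j
      conv_rhs => rw [pow_two]
      rw [Complex.mul_re]; simp only [hu, hv]; ring
    have h2 : ∑ j, (u j ^ 2 - v j ^ 2) = (φ ^ 2 * μ).re := by
      rw [Finset.sum_congr rfl fun j _ => h1 j, ← Complex.re_sum]
      congr 1
      rw [hμ, Finset.mul_sum]
      exact Finset.sum_congr rfl fun j _ => by ring
    rw [hU, hV, ← Finset.sum_sub_distrib, h2, hφ2μ, Complex.ofReal_re]
  have hVsmall : V ≤ δ / 2 := by linarith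
  have hUbig : 1 - δ / 2 ≤ U := by linarith
  have hQle : Q ≤ 1 / n + δ / 2 := by linarith [hS'', hm2le]
  have hu4 : ∑ j, u j ^ 4 ≤ Q := by
    rw [hQ]
    apply Finset.sum_le_sum
    intro j _
    rw [← hw2 j]
    have e : (u j ^ 2 + v j ^ 2) ^ 2 = u j ^ 4 + (2 * (u j * v j) ^ 2 + (v j ^ 2) ^ 2) := by ring
    linarith [sq_nonneg (u j * v j), sq_nonneg (v j ^ 2), e]
  -- the sign vector
  set s : ℝ := (Real.sqrt n)⁻¹ with hs
  have hspos : 0 < s := by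
    rw [hs]; exact inv_pos.mpr (Real.sqrt_pos.mpr hn0)
  have hs2 : s ^ 2 = 1 / n := by
    rw [hs, inv_pow, Real.sq_sqrt hn0.le, one_div]
  have hns2 : (n:ℝ) * s ^ 2 = 1 := by rw [hs2]; field_simp
  set y : Fin n → ℂ := fun j => ((if 0 ≤ u j then s else -s : ℝ) : ℂ) with hy
  refine ⟨y, ?_, ?_⟩
  · intro j
    rw [hy]
    dsimp only
    split
    · left; rw [hs]
    · right; rw [hs]; push_cast; ring
  -- the distance bound
  set c : ℝ := ‖∑ j, (starRingEnd ℂ) (y j) * x j‖ with hc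
  set R : ℝ := ∑ j, s * |u j| with hR
  have hcR : R ≤ c := by
    have e1 : (∑ j, (starRingEnd ℂ) (y j) * (φ * x j)) = φ * ∑ j, (starRingEnd ℂ) (y j) * x j := by
      rw [Finset.mul_sum]
      exact Finset.sum_congr rfl fun j _ => by ring
    have e2 : ‖∑ j, (starRingEnd ℂ) (y j) * (φ * x j)‖ = c := by
      rw [e1, norm_mul, habsφ, one_mul, hc]
    have e3 : (∑ j, (starRingEnd ℂ) (y j) * (φ * x j)).re = R := by
      rw [Complex.re_sum, hR]
      apply Finset.sum_congr rfl
      intro j _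
      rw [hy]
      dsimp only
      rw [Complex.conj_ofReal]
      rw [show ((if 0 ≤ u j then s else -s : ℝ) : ℂ) * (φ * x j)
        = (((if 0 ≤ u j then s else -s : ℝ)) : ℂ) * (φ * x j) from rfl]
      rw [Complex.re_ofReal_mul]
      by_cases h : 0 ≤ u j
      · rw [if_pos h, abs_of_nonneg h]
      · rw [if_neg h, abs_of_neg (lt_of_not_ge h)]; ring
    calc R = (∑ j, (starRingEnd ℂ) (y j) * (φ * x j)).re := e3.symm
      _ ≤ ‖∑ j, (starRingEnd ℂ) (y j) * (φ * x j)‖ := Complex.re_le_norm _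
      _ = c := e2
  -- bound on E
  set E : ℝ := ∑ j, (|u j| - s) ^ 2 with hE
  have hEb : E ≤ n * δ := by
    have step1 : ∀ j, (|u j| - s) ^ 2 ≤ n * (u j ^ 2 - 1 / n) ^ 2 := by
      intro j
      set t : ℝ := |u j| with ht
      have ht0 : 0 ≤ t := abs_nonneg _
      have ht2 : t ^ 2 = u j ^ 2 := sq_abs _
      have key : u j ^ 2 - 1 / n = (t - s) * (t + s) := by
        rw [← ht2, ← hs2]; ring
      rw [key]
      have h1 : s ^ 2 ≤ (t + s) ^ 2 := by
        have e : (t + s) ^ 2 = t ^ 2 + 2 * (t * s) + s ^ 2 := by ring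
        linarith [sq_nonneg t, mul_nonneg ht0 hspos.le, e]
      calc (t - s) ^ 2 = ((t - s) ^ 2) * ((n:ℝ) * s ^ 2) := by rw [hns2, mul_one]
        _ ≤ ((t - s) ^ 2) * ((n:ℝ) * (t + s) ^ 2) := by
            apply mul_le_mul_of_nonneg_left _ (sq_nonneg _)
            exact mul_le_mul_of_nonneg_left h1 hn0.le
        _ = n * ((t - s) * (t + s)) ^ 2 := by ring
    have step2 : ∑ j, (u j ^ 2 - 1 / n) ^ 2 ≤ δ := by
      have expand : ∑ j, (u j ^ 2 - 1 / n) ^ 2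
          = (∑ j, u j ^ 4) - (2 / n) * U + (n:ℝ) * (1 / n ^ 2) := by
        have e : ∀ j : Fin n, (u j ^ 2 - 1 / n) ^ 2
            = u j ^ 4 - (2 / n) * u j ^ 2 + 1 / n ^ 2 := fun j => by
          field_simp; ring
        rw [Finset.sum_congr rfl fun j _ => e j]
        rw [Finset.sum_add_distrib, Finset.sum_sub_distrib, ← Finset.mul_sum, ← hU]
        simp [Finset.card_univ, mul_comm]
      have hc1 : (2 / (n:ℝ)) * (1 - δ / 2) ≤ (2 / n) * U :=
        mul_le_mul_of_nonneg_left hUbig (by positivity)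
      have hδn : δ / n ≤ δ / 2 := by
        apply div_le_div_of_nonneg_left hδpos.le (by norm_num) hn2
      have hnn2 : (n:ℝ) * (1 / n ^ 2) = 1 / n := by field_simp
      rw [expand, hnn2]
      have : (2 / (n:ℝ)) * (1 - δ / 2) = 2 / n - δ / n := by field_simp
      linarith [hu4, hQle, hc1, hδn]
    calc E ≤ ∑ j, (n:ℝ) * (u j ^ 2 - 1 / n) ^ 2 := Finset.sum_le_sum fun j _ => step1 j
      _ = (n:ℝ) * ∑ j, (u j ^ 2 - 1 / n) ^ 2 := by rw [Finset.mul_sum]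
      _ ≤ n * δ := mul_le_mul_of_nonneg_left step2 hn0.le
  -- relation between R, U, E
  have hRE : E = U - 2 * R + 1 := by
    have e : ∀ j : Fin n, (|u j| - s) ^ 2 = u j ^ 2 - 2 * (s * |u j|) + s ^ 2 := fun j => by
      rw [show u j ^ 2 = |u j| ^ 2 from (sq_abs _).symm]; ring
    rw [hE, Finset.sum_congr rfl fun j _ => e j, Finset.sum_add_distrib, Finset.sum_sub_distrib,
      ← hU, ← Finset.mul_sum, ← hR]
    simp only [Finset.sum_const, Finset.card_univ, Fintype.card_fin, nsmul_eq_mul]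
    rw [hns2]
  have hRge : 1 - (n:ℝ) * δ ≤ R := by
    have : δ / 2 ≤ (n:ℝ) * δ := by
      have h2 : 1 * δ ≤ (n:ℝ) * δ := mul_le_mul_of_nonneg_right hn1 hδpos.le
      linarith
    linarith [hRE, hEb, hUbig]
  have hc0 : 0 ≤ c := norm_nonneg _
  have h1c : 1 - c ^ 2 ≤ 2 * ((n:ℝ) * δ) := by
    have hd0 : 0 ≤ 1 - (n:ℝ) * δ := by linarith
    have hcc : 1 - (n:ℝ) * δ ≤ c := le_trans hRge hcR
    have hp := pow_le_pow_left₀ hd0 hcc 2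
    have e : (1 - (n:ℝ) * δ) ^ 2 = 1 - 2 * ((n:ℝ) * δ) + ((n:ℝ) * δ) ^ 2 := by ring
    linarith [sq_nonneg ((n:ℝ) * δ), hp, e]
  -- final computation
  have h25 : 1 - c ^ 2 ≤ (5 * (n:ℝ) ^ (-(ε / 4))) ^ 2 := by
    have e2 : (n:ℝ) ^ (-(1+ε)) ≤ (n:ℝ) ^ (-(ε/2)) :=
      Real.rpow_le_rpow_of_exponent_le hn1 (by linarith)
    have e3 : (5 * (n:ℝ) ^ (-(ε/4))) ^ 2 = 25 * (n:ℝ) ^ (-(ε/2)) := by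
      rw [mul_pow]
      rw [show ((n:ℝ) ^ (-(ε/4))) ^ (2:ℕ) = ((n:ℝ) ^ (-(ε/4))) ^ ((2:ℕ):ℝ) from
        (Real.rpow_natCast _ 2).symm]
      rw [← Real.rpow_mul hn0.le]
      rw [show (-(ε/4)) * ((2:ℕ):ℝ) = -(ε/2) by push_cast; ring]
      norm_num
    have e4 : 0 < (n:ℝ) ^ (-(ε/2)) := Real.rpow_pos_of_pos hn0 _
    rw [e3]
    calc 1 - c ^ 2 ≤ 2 * ((n:ℝ) * δ) := h1c
      _ = 2 * (n:ℝ) ^ (-(1+ε)) := by rw [hnd]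
      _ ≤ 2 * (n:ℝ) ^ (-(ε/2)) := by linarith
      _ ≤ 25 * (n:ℝ) ^ (-(ε/2)) := by linarith
  calc Real.sqrt (1 - c ^ 2) ≤ Real.sqrt ((5 * (n:ℝ) ^ (-(ε/4))) ^ 2) := Real.sqrt_le_sqrt h25
    _ = 5 * (n:ℝ) ^ (-(ε/4)) := Real.sqrt_sq (by positivity)
end

section
/- Let B_1, …, B_s be Hermitian d×d complex matrices and let H = Σ_{j=1}^s (E_{0j} + E_{j0}) ⊗ B_j. Then the operator (spectral) norm of H satisfies ‖H‖² = ‖Σ_{j=1}^s B_j²‖ ≤ Σ_{j=1}^s ‖B_j‖². -/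
open Matrix Kronecker
open scoped Matrix.Norms.L2Operator

/-- The operator (spectral) norm of a complex square matrix, i.e. the norm of the
continuous linear map it induces on Euclidean space (its largest singular value). -/
noncomputable def matOpNorm {m : Type*} [Fintype m] [DecidableEq m]
    (A : Matrix m m ℂ) : ℝ :=
  ‖Matrix.toEuclideanCLM (𝕜 := ℂ) A‖




section Abstract
variable {E : Type*} [NormedRing E] [StarRing E] [CStarRing E]

lemma sa_norm_sq (a : E) (ha : IsSelfAdjoint a) : ‖a * a‖ = ‖a‖ ^ 2 := by
  nth_rewrite 1 [← ha.star_eq]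
  rw [CStarRing.norm_star_mul_self, sq]

lemma sa_norm_pow_two_pow (a : E) (ha : IsSelfAdjoint a) (k : ℕ) :
    ‖a ^ 2 ^ k‖ = ‖a‖ ^ 2 ^ k := by
  induction k with
  | zero => simp
  | succ k ih =>
    have h1 : IsSelfAdjoint (a ^ 2 ^ k) := ha.pow _
    rw [pow_succ, pow_mul, pow_mul, sq, sq, sa_norm_sq _ h1, ih, sq]

lemma norm_le_norm_add_of_orth (p m : E) (hp : IsSelfAdjoint p) (hpm : p * m = 0) :
    ‖p‖ ≤ ‖p + m‖ := by
  rcases eq_or_lt_of_le (norm_nonneg p) with h0 | h0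
  · rw [← h0]; exact norm_nonneg _
  have h1 : ‖p‖ ^ 2 = ‖p * (p + m)‖ := by
    rw [mul_add, hpm, add_zero, sa_norm_sq p hp]
  have h2 : ‖p * (p + m)‖ ≤ ‖p‖ * ‖p + m‖ := norm_mul_le _ _
  nlinarith

lemma norm_add_le_max_of_orth (p m : E) (hp : IsSelfAdjoint p) (hm : IsSelfAdjoint m)
    (hpm : p * m = 0) (hmp : m * p = 0) :
    ‖p + m‖ ≤ max ‖p‖ ‖m‖ := by
  have hpm' : ∀ n : ℕ, p ^ (n + 1) * m = 0 := fun n => by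
    rw [pow_succ, mul_assoc, hpm, mul_zero]
  have hmp' : ∀ n : ℕ, m ^ (n + 1) * p = 0 := fun n => by
    rw [pow_succ, mul_assoc, hmp, mul_zero]
  have hpow : ∀ n : ℕ, (p + m) ^ (n + 1) = p ^ (n + 1) + m ^ (n + 1) := by
    intro n
    induction n with
    | zero => simp
    | succ n ih =>
      calc (p + m) ^ (n + 1 + 1) = (p + m) ^ (n + 1) * (p + m) := pow_succ _ _
        _ = (p ^ (n+1) + m ^ (n+1)) * (p + m) := by rw [ih]
        _ = p ^ (n+1) * p + p ^ (n+1) * m + (m ^ (n+1) * p + m ^ (n+1) * m) := by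
            rw [add_mul, mul_add, mul_add]
        _ = p ^ (n + 1 + 1) + m ^ (n + 1 + 1) := by
            rw [hpm' n, hmp' n, add_zero, zero_add, ← pow_succ, ← pow_succ]
  set t : ℝ := max ‖p‖ ‖m‖ with ht
  have htp : ‖p‖ ≤ t := le_max_left _ _
  have htm : ‖m‖ ≤ t := le_max_right _ _
  have ht0 : 0 ≤ t := le_trans (norm_nonneg p) htp
  have key : ∀ k : ℕ, ‖p + m‖ ^ 2 ^ k ≤ 2 * t ^ 2 ^ k := by
    intro k
    obtain ⟨n, hn⟩ : ∃ n : ℕ, 2 ^ k = n + 1 :=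
      ⟨2 ^ k - 1, (Nat.succ_pred_eq_of_pos (Nat.two_pow_pos k)).symm⟩
    calc ‖p + m‖ ^ 2 ^ k = ‖(p + m) ^ 2 ^ k‖ := (sa_norm_pow_two_pow _ (hp.add hm) k).symm
      _ = ‖p ^ 2 ^ k + m ^ 2 ^ k‖ := by rw [hn, hpow]
      _ ≤ ‖p ^ 2 ^ k‖ + ‖m ^ 2 ^ k‖ := norm_add_le _ _
      _ = ‖p‖ ^ 2 ^ k + ‖m‖ ^ 2 ^ k := by
          rw [sa_norm_pow_two_pow _ hp, sa_norm_pow_two_pow _ hm]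
      _ ≤ t ^ 2 ^ k + t ^ 2 ^ k := by
          have h1 := pow_le_pow_left₀ (norm_nonneg p) htp (2 ^ k)
          have h2 := pow_le_pow_left₀ (norm_nonneg m) htm (2 ^ k)
          linarith
      _ = 2 * t ^ 2 ^ k := by ring
  rcases eq_or_lt_of_le ht0 with ht0' | ht0'
  · have h0 := key 0
    simp only [pow_one, pow_zero] at h0
    calc ‖p + m‖ = ‖p + m‖ ^ 2 ^ 0 := by norm_num
      _ ≤ 2 * t ^ 2 ^ 0 := key 0
      _ = 2 * t := by norm_num
      _ ≤ t := by rw [← ht0']; norm_num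
  by_contra hcon
  push_neg at hcon
  set r : ℝ := ‖p + m‖ / t with hr
  have hr1 : 1 < r := (one_lt_div ht0').2 hcon
  obtain ⟨n, hn⟩ : ∃ n : ℕ, 2 < r ^ n := pow_unbounded_of_one_lt 2 hr1
  have h2 : r ^ n ≤ r ^ 2 ^ n := pow_le_pow_right₀ hr1.le (Nat.le_of_lt (Nat.lt_two_pow_self (n := n)))
  have h3 : r ^ 2 ^ n ≤ 2 := by
    rw [hr, div_pow, div_le_iff₀ (by positivity)]
    exact key n
  linarith

lemma norm_add_of_orth_eq (p m : E) (hp : IsSelfAdjoint p) (hm : IsSelfAdjoint m)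
    (hpm : p * m = 0) (hmp : m * p = 0) (hnorm : ‖p‖ = ‖m‖) : ‖p + m‖ = ‖p‖ := by
  refine le_antisymm ?_ (norm_le_norm_add_of_orth p m hp hpm)
  have := norm_add_le_max_of_orth p m hp hm hpm hmp
  rwa [← hnorm, max_self] at this

end Abstract


open Matrix Kronecker
open scoped Matrix.Norms.L2Operator

lemma euclidean_apply {n : Type*} [Fintype n] [DecidableEq n] (A : Matrix n n ℂ)
    (x : EuclideanSpace ℂ n) (i : n) :
    (Matrix.toEuclideanCLM (𝕜 := ℂ) A x) i = ∑ j, A i j * x j := rfl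

noncomputable def projE (s d : ℕ) (x : EuclideanSpace ℂ (Fin (s+1) × Fin d)) :
    EuclideanSpace ℂ (Fin d) := WithLp.toLp 2 (fun i => x (0, i))

noncomputable def inclE (s d : ℕ) (y : EuclideanSpace ℂ (Fin d)) :
    EuclideanSpace ℂ (Fin (s+1) × Fin d) :=
  WithLp.toLp 2 (fun p : Fin (s+1) × Fin d => if p.1 = 0 then y p.2 else 0)

lemma corner_norm (s d : ℕ) (S : Matrix (Fin d) (Fin d) ℂ) :
    ‖(single (0 : Fin (s+1)) (0 : Fin (s+1)) (1:ℂ)) ⊗ₖ S‖ = ‖S‖ := by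
  set T := (single (0 : Fin (s+1)) (0 : Fin (s+1)) (1:ℂ)) ⊗ₖ S with hT
  have hTapp : ∀ (x : EuclideanSpace ℂ (Fin (s+1) × Fin d)) (a : Fin (s+1)) (i : Fin d),
      (Matrix.toEuclideanCLM (𝕜 := ℂ) T x) (a, i)
        = if a = 0 then ∑ j, S i j * x (0, j) else 0 := by
    intro x a i
    rw [euclidean_apply, Fintype.sum_prod_type]
    by_cases ha : a = 0
    · simp [hT, ha, single, ite_and, Finset.sum_ite_eq, eq_comm]
    · simp [hT, ha, single, ite_and, Finset.sum_ite_eq, eq_comm,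
        fun b => Ne.symm (ha ∘ Eq.symm)]
  have hnorm : ∀ (x : EuclideanSpace ℂ (Fin (s+1) × Fin d)),
      ‖Matrix.toEuclideanCLM (𝕜 := ℂ) T x‖
        = ‖Matrix.toEuclideanCLM (𝕜 := ℂ) S (projE s d x)‖ := by
    intro x
    rw [EuclideanSpace.norm_eq, EuclideanSpace.norm_eq]
    congr 1
    rw [Fintype.sum_prod_type]
    have h1 : ∀ a : Fin (s+1), (∑ i, ‖(Matrix.toEuclideanCLM (𝕜 := ℂ) T x) (a, i)‖ ^ 2)
        = if a = 0 then
            ∑ i, ‖(Matrix.toEuclideanCLM (𝕜 := ℂ) S (projE s d x)) i‖ ^ 2 else 0 := by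
      intro a
      by_cases ha : a = 0 <;> simp [hTapp, ha, euclidean_apply, projE, mulVec, dotProduct]
    rw [Finset.sum_congr rfl fun a _ => h1 a]
    simp
  have hπ : ∀ x : EuclideanSpace ℂ (Fin (s+1) × Fin d), ‖projE s d x‖ ≤ ‖x‖ := by
    intro x
    rw [EuclideanSpace.norm_eq, EuclideanSpace.norm_eq]
    apply Real.sqrt_le_sqrt
    rw [Fintype.sum_prod_type]
    calc ∑ i, ‖projE s d x i‖ ^ 2 = ∑ i, ‖x (0, i)‖ ^ 2 := by simp [projE]
      _ ≤ ∑ a : Fin (s+1), ∑ i, ‖x (a, i)‖ ^ 2 :=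
        Finset.single_le_sum (f := fun a => ∑ i, ‖x (a, i)‖ ^ 2)
          (fun a _ => by positivity) (Finset.mem_univ 0)
  apply le_antisymm
  · rw [Matrix.cstar_norm_def]
    refine ContinuousLinearMap.opNorm_le_bound _ (norm_nonneg S) fun x => ?_
    rw [hnorm x]
    calc ‖Matrix.toEuclideanCLM (𝕜 := ℂ) S (projE s d x)‖
        ≤ ‖Matrix.toEuclideanCLM (𝕜 := ℂ) S‖ * ‖projE s d x‖ :=
          ContinuousLinearMap.le_opNorm _ _
      _ ≤ ‖S‖ * ‖x‖ := mul_le_mul le_rfl (hπ x) (norm_nonneg _) (norm_nonneg _)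
  · rw [Matrix.cstar_norm_def (A := S)]
    refine ContinuousLinearMap.opNorm_le_bound _ (norm_nonneg T) fun y => ?_
    have hxy : projE s d (inclE s d y) = y := by
      ext i; simp [projE, inclE]
    have hxn : ‖inclE s d y‖ = ‖y‖ := by
      rw [EuclideanSpace.norm_eq, EuclideanSpace.norm_eq]
      congr 1
      rw [Fintype.sum_prod_type]
      have h1 : ∀ a : Fin (s+1), (∑ i, ‖inclE s d y (a, i)‖ ^ 2)
          = if a = 0 then ∑ i, ‖y i‖ ^ 2 else 0 := by
        intro a; by_cases ha : a = 0 <;> simp [inclE, ha]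
      rw [Finset.sum_congr rfl fun a _ => h1 a]
      simp
    calc ‖Matrix.toEuclideanCLM (𝕜 := ℂ) S y‖
        = ‖Matrix.toEuclideanCLM (𝕜 := ℂ) T (inclE s d y)‖ := by rw [hnorm, hxy]
      _ ≤ ‖T‖ * ‖inclE s d y‖ := by
          rw [Matrix.cstar_norm_def (A := T)]
          exact ContinuousLinearMap.le_opNorm _ _
      _ = ‖T‖ * ‖y‖ := by rw [hxn]

lemma kron_std_conjT {s d : ℕ} (a b : Fin (s+1)) (B : Matrix (Fin d) (Fin d) ℂ) :
    (single a b (1:ℂ) ⊗ₖ B)ᴴ = single b a (1:ℂ) ⊗ₖ Bᴴ := by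
  ext ⟨p1, p2⟩ ⟨q1, q2⟩
  simp [conjTranspose_apply, single, apply_ite (star : ℂ → ℂ), and_comm]

lemma kron_sum_right {s d : ℕ} (A : Matrix (Fin (s+1)) (Fin (s+1)) ℂ) {ι : Type*} (t : Finset ι)
    (f : ι → Matrix (Fin d) (Fin d) ℂ) :
    A ⊗ₖ (∑ i ∈ t, f i) = ∑ i ∈ t, A ⊗ₖ f i := by
  ext ⟨p1, p2⟩ ⟨q1, q2⟩
  simp [Matrix.sum_apply, Finset.mul_sum]

/-- Let `B_1,…,B_s` be Hermitian `d×d` matrices and `H = ∑_j (E_{0j} + E_{j0}) ⊗ B_j`.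
Then `‖H‖² = ‖∑_j B_j²‖ ≤ ∑_j ‖B_j‖²` (operator norms). -/
theorem stmt_13 (s d : ℕ) (B : Fin s → Matrix (Fin d) (Fin d) ℂ)
    (hB : ∀ j, (B j).IsHermitian) :
    matOpNorm (∑ j : Fin s,
          (Matrix.single (0 : Fin (s + 1)) j.succ (1 : ℂ)
            + Matrix.single j.succ 0 1) ⊗ₖ B j) ^ 2
      = matOpNorm (∑ j : Fin s, B j ^ 2)
    ∧ matOpNorm (∑ j : Fin s, B j ^ 2) ≤ ∑ j : Fin s, matOpNorm (B j) ^ 2 := by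
  classical
  have hBsa : ∀ j, IsSelfAdjoint (B j) := fun j => (hB j).isSelfAdjoint
  simp only [matOpNorm, ← Matrix.cstar_norm_def]
  set N : Matrix (Fin (s+1) × Fin d) (Fin (s+1) × Fin d) ℂ :=
    ∑ j : Fin s, single (j.succ) (0 : Fin (s+1)) (1:ℂ) ⊗ₖ B j with hN
  have hstarN : star N = ∑ j : Fin s, single (0 : Fin (s+1)) j.succ (1:ℂ) ⊗ₖ B j := by
    rw [hN, star_sum]
    refine Finset.sum_congr rfl fun j _ => ?_
    rw [Matrix.star_eq_conjTranspose, kron_std_conjT, (hB j).eq]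
  have hHN : (∑ j : Fin s,
      (Matrix.single (0 : Fin (s + 1)) j.succ (1 : ℂ)
        + Matrix.single j.succ 0 1) ⊗ₖ B j) = star N + N := by
    rw [hstarN, hN, ← Finset.sum_add_distrib]
    exact Finset.sum_congr rfl fun j _ => add_kronecker _ _ _
  have hNN : N * N = 0 := by
    rw [hN, Finset.sum_mul_sum]
    refine Finset.sum_eq_zero fun j _ => Finset.sum_eq_zero fun k _ => ?_
    have hz : single j.succ (0 : Fin (s+1)) (1:ℂ)
        * single k.succ (0 : Fin (s+1)) (1:ℂ) = 0 :=
      single_mul_single_of_ne _ _ _ _ (Fin.succ_ne_zero k).symm _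
    rw [← mul_kronecker_mul, hz, zero_kronecker]
  have hsNsN : star N * star N = 0 := by rw [← Matrix.star_mul, hNN, star_zero]
  have hP : star N * N = single (0 : Fin (s+1)) (0 : Fin (s+1)) (1:ℂ) ⊗ₖ (∑ j : Fin s, B j ^ 2) := by
    rw [hstarN, hN, Finset.sum_mul_sum, kron_sum_right]
    refine Finset.sum_congr rfl fun j _ => ?_
    rw [Finset.sum_eq_single j (fun k _ hk => ?_) (fun h => absurd (Finset.mem_univ j) h)]
    · rw [← mul_kronecker_mul, single_mul_single_same, one_mul, ← sq]
    · have hz : single (0 : Fin (s+1)) j.succ (1:ℂ)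
          * single k.succ (0 : Fin (s+1)) (1:ℂ) = 0 :=
        single_mul_single_of_ne _ _ _ _ (fun h => hk (Fin.succ_injective _ h).symm) _
      rw [← mul_kronecker_mul, hz, zero_kronecker]
  have hPM : (star N * N) * (N * star N) = 0 := by
    rw [mul_assoc, ← mul_assoc N N (star N), hNN, zero_mul, mul_zero]
  have hMP : (N * star N) * (star N * N) = 0 := by
    rw [mul_assoc, ← mul_assoc (star N) (star N) N, hsNsN, zero_mul, mul_zero]
  have hHsa : IsSelfAdjoint (star N + N) := by
    show star _ = _
    rw [star_add, star_star]
    exact add_comm _ _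
  have hsq : (star N + N) * (star N + N) = star N * N + N * star N := by
    rw [add_mul, mul_add, mul_add, hNN, hsNsN, add_zero, zero_add]
  have hnormPM : ‖star N * N‖ = ‖N * star N‖ := by
    rw [CStarRing.norm_star_mul_self, CStarRing.norm_self_mul_star]
  rw [hHN]
  constructor
  · calc ‖star N + N‖ ^ 2 = ‖(star N + N) * (star N + N)‖ := (sa_norm_sq _ hHsa).symm
      _ = ‖star N * N + N * star N‖ := by rw [hsq]
      _ = ‖star N * N‖ := norm_add_of_orth_eq _ _ (IsSelfAdjoint.star_mul_self N)
          (IsSelfAdjoint.mul_star_self N) hPM hMP hnormPM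
      _ = ‖single (0 : Fin (s+1)) (0 : Fin (s+1)) (1:ℂ) ⊗ₖ (∑ j : Fin s, B j ^ 2)‖ := by rw [hP]
      _ = ‖∑ j : Fin s, B j ^ 2‖ := corner_norm s d _
  · calc ‖∑ j : Fin s, B j ^ 2‖ ≤ ∑ j : Fin s, ‖B j ^ 2‖ := norm_sum_le _ _
      _ = ∑ j : Fin s, ‖B j‖ ^ 2 := Finset.sum_congr rfl fun j _ => by
          rw [pow_two, sa_norm_sq _ (hBsa j)]
end

section
/- Let B_1, …, B_s be Hermitian d×d complex matrices and H = Σ_{j=1}^s (E_{0j} + E_{j0}) ⊗ B_j. Then the supremum over unit vectors φ ∈ ℂ^{s+1} and unit vectors ψ ∈ ℂ^d of ⟨φ ⊗ ψ, H(φ ⊗ ψ)⟩ equals the supremum over unit vectors ψ ∈ ℂ^d of √(Σ_{j=1}^s ⟨ψ, B_j ψ⟩²). -/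
open Matrix Kronecker

lemma stmt16_dot_sum (m : ℕ) (A : Matrix (Fin m) (Fin m) ℂ) (φ : Fin m → ℂ) :
    (star φ ⬝ᵥ (A *ᵥ φ)) = ∑ x : Fin m × Fin m, star (φ x.1) * (A x.1 x.2 * φ x.2) := by
  rw [Fintype.sum_prod_type]
  simp [dotProduct, mulVec, Finset.mul_sum]

lemma stmt16_kron_quad (m n : ℕ) (A : Matrix (Fin m) (Fin m) ℂ) (M : Matrix (Fin n) (Fin n) ℂ)
    (φ : Fin m → ℂ) (ψ : Fin n → ℂ) :
    (star (fun p : Fin m × Fin n => φ p.1 * ψ p.2) ⬝ᵥ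
      ((A ⊗ₖ M) *ᵥ fun p : Fin m × Fin n => φ p.1 * ψ p.2))
      = (star φ ⬝ᵥ (A *ᵥ φ)) * (star ψ ⬝ᵥ (M *ᵥ ψ)) := by
  have lhs : (star (fun p : Fin m × Fin n => φ p.1 * ψ p.2) ⬝ᵥ
      ((A ⊗ₖ M) *ᵥ fun p : Fin m × Fin n => φ p.1 * ψ p.2))
      = ∑ r : (Fin m × Fin n) × (Fin m × Fin n),
          (star (φ r.1.1) * star (ψ r.1.2)) *
            (A r.1.1 r.2.1 * M r.1.2 r.2.2 * (φ r.2.1 * ψ r.2.2)) := by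
    rw [Fintype.sum_prod_type]
    simp [dotProduct, mulVec, kroneckerMap_apply, Finset.mul_sum, star_mul', mul_comm]
  rw [lhs, stmt16_dot_sum, stmt16_dot_sum, Finset.sum_mul_sum,
    ← Fintype.sum_prod_type (f := fun r : (Fin m × Fin m) × (Fin n × Fin n) =>
      star (φ r.1.1) * (A r.1.1 r.1.2 * φ r.1.2) *
        (star (ψ r.2.1) * (M r.2.1 r.2.2 * ψ r.2.2)))]
  apply Fintype.sum_equiv (Equiv.prodProdProdComm (Fin m) (Fin n) (Fin m) (Fin n))
  intro r
  simp [Equiv.prodProdProdComm]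
  ring

lemma stmt16_herm_real (d : ℕ) (B : Matrix (Fin d) (Fin d) ℂ) (hB : B.IsHermitian)
    (ψ : Fin d → ℂ) :
    (star ψ ⬝ᵥ (B *ᵥ ψ)) = (((star ψ ⬝ᵥ (B *ᵥ ψ)).re : ℝ) : ℂ) := by
  have h : star (star ψ ⬝ᵥ (B *ᵥ ψ)) = star ψ ⬝ᵥ (B *ᵥ ψ) :=
    calc star (star ψ ⬝ᵥ (B *ᵥ ψ)) = star (B *ᵥ ψ) ⬝ᵥ star (star ψ) :=
          (star_dotProduct_star _ _).symm
      _ = (star ψ ᵥ* Bᴴ) ⬝ᵥ ψ := by rw [star_mulVec, star_star]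
      _ = star ψ ⬝ᵥ (Bᴴ *ᵥ ψ) := (dotProduct_mulVec _ _ _).symm
      _ = star ψ ⬝ᵥ (B *ᵥ ψ) := by rw [hB.eq]
  exact (Complex.conj_eq_iff_re.mp h).symm

lemma stmt16_basis_dot (m : ℕ) (a b : Fin m) (φ : Fin m → ℂ) :
    star φ ⬝ᵥ (single a b (1 : ℂ) *ᵥ φ) = (starRingEnd ℂ) (φ a) * φ b := by
  rw [single_mulVec]
  simp [dotProduct, Function.update_apply, Finset.sum_ite_eq']

lemma stmt16_sum_mulVec {ι m n : Type*} [Fintype n] (t : Finset ι)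
    (A : ι → Matrix m n ℂ) (v : n → ℂ) :
    (∑ j ∈ t, A j) *ᵥ v = ∑ j ∈ t, (A j *ᵥ v) := by
  ext i
  simp only [mulVec, dotProduct, Finset.sum_apply, Matrix.sum_apply, Finset.sum_mul]
  exact Finset.sum_comm

lemma stmt16_dotProduct_sum {ι n : Type*} [Fintype n] (t : Finset ι)
    (v : n → ℂ) (w : ι → n → ℂ) :
    v ⬝ᵥ (∑ j ∈ t, w j) = ∑ j ∈ t, v ⬝ᵥ w j := by
  simp only [dotProduct, Finset.sum_apply, Finset.mul_sum]
  exact Finset.sum_comm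

lemma stmt16_quad_eval (s d : ℕ) (B : Fin s → Matrix (Fin d) (Fin d) ℂ)
    (hB : ∀ j, (B j).IsHermitian) (φ : Fin (s + 1) → ℂ) (ψ : Fin d → ℂ) :
    (star (fun p : Fin (s + 1) × Fin d => φ p.1 * ψ p.2) ⬝ᵥ
      ((∑ j : Fin s,
          (Matrix.single (0 : Fin (s + 1)) j.succ (1 : ℂ)
            + Matrix.single j.succ 0 1) ⊗ₖ B j)
        *ᵥ fun p : Fin (s + 1) × Fin d => φ p.1 * ψ p.2)).re
    = ∑ j : Fin s, 2 * ((starRingEnd ℂ) (φ 0) * φ j.succ).re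
        * (star ψ ⬝ᵥ (B j *ᵥ ψ)).re := by
  rw [stmt16_sum_mulVec, stmt16_dotProduct_sum, Complex.re_sum]
  refine Finset.sum_congr rfl fun j _ => ?_
  rw [stmt16_kron_quad, add_mulVec, dotProduct_add, stmt16_basis_dot, stmt16_basis_dot,
    stmt16_herm_real d (B j) (hB j) ψ]
  have : (starRingEnd ℂ) (φ j.succ) * φ 0
      = (starRingEnd ℂ) ((starRingEnd ℂ) (φ 0) * φ j.succ) := by
    simp [mul_comm]
  rw [this, Complex.add_conj]
  simp [Complex.ofReal_mul]

lemma stmt16_upper_bound (s : ℕ) (x : Fin s → ℝ) (φ : Fin (s + 1) → ℂ)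
    (hφ : (∑ a, ‖φ a‖ ^ 2) = 1) :
    ∑ j : Fin s, 2 * ((starRingEnd ℂ) (φ 0) * φ j.succ).re * x j
      ≤ Real.sqrt (∑ j : Fin s, x j ^ 2) := by
  set a := ‖φ 0‖ with ha
  set b : Fin s → ℝ := fun j => ‖φ j.succ‖ with hb
  have hsum : a ^ 2 + ∑ j, b j ^ 2 = 1 := by
    rw [← hφ, Fin.sum_univ_succ]
  have step1 : ∑ j : Fin s, 2 * ((starRingEnd ℂ) (φ 0) * φ j.succ).re * x j
      ≤ ∑ j : Fin s, 2 * a * (b j * |x j|) := by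
    refine Finset.sum_le_sum fun j _ => ?_
    have h1 : ((starRingEnd ℂ) (φ 0) * φ j.succ).re * x j
        ≤ a * b j * |x j| := by
      calc ((starRingEnd ℂ) (φ 0) * φ j.succ).re * x j
          ≤ |((starRingEnd ℂ) (φ 0) * φ j.succ).re * x j| := le_abs_self _
        _ = |((starRingEnd ℂ) (φ 0) * φ j.succ).re| * |x j| := abs_mul _ _
        _ ≤ ‖(starRingEnd ℂ) (φ 0) * φ j.succ‖ * |x j| := by
            exact mul_le_mul_of_nonneg_right (Complex.abs_re_le_norm _) (abs_nonneg _)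
        _ = a * b j * |x j| := by rw [norm_mul, Complex.norm_conj]
    nlinarith
  have step2 : ∑ j : Fin s, b j * |x j|
      ≤ Real.sqrt (∑ j, b j ^ 2) * Real.sqrt (∑ j, |x j| ^ 2) :=
    Real.sum_mul_le_sqrt_mul_sqrt _ _ _
  have hxx : ∑ j : Fin s, |x j| ^ 2 = ∑ j, x j ^ 2 := by
    simp [sq_abs]
  rw [hxx] at step2
  have key : 2 * a * Real.sqrt (∑ j, b j ^ 2) ≤ 1 := by
    have hs : Real.sqrt (∑ j, b j ^ 2) ^ 2 = ∑ j, b j ^ 2 :=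
      Real.sq_sqrt (Finset.sum_nonneg fun j _ => sq_nonneg _)
    nlinarith [sq_nonneg (a - Real.sqrt (∑ j, b j ^ 2)), Real.sqrt_nonneg (∑ j, b j ^ 2),
      norm_nonneg (φ 0)]
  calc ∑ j : Fin s, 2 * ((starRingEnd ℂ) (φ 0) * φ j.succ).re * x j
      ≤ ∑ j : Fin s, 2 * a * (b j * |x j|) := step1
    _ = 2 * a * ∑ j : Fin s, b j * |x j| := by rw [Finset.mul_sum]
    _ ≤ 2 * a * (Real.sqrt (∑ j, b j ^ 2) * Real.sqrt (∑ j, x j ^ 2)) := by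
        refine mul_le_mul_of_nonneg_left step2 ?_
        positivity
    _ = (2 * a * Real.sqrt (∑ j, b j ^ 2)) * Real.sqrt (∑ j, x j ^ 2) := by ring
    _ ≤ 1 * Real.sqrt (∑ j, x j ^ 2) := by
        exact mul_le_mul_of_nonneg_right key (Real.sqrt_nonneg _)
    _ = Real.sqrt (∑ j, x j ^ 2) := one_mul _

lemma stmt16_achieve (s : ℕ) (x : Fin s → ℝ) :
    ∃ φ : Fin (s + 1) → ℂ, (∑ a, ‖φ a‖ ^ 2) = 1 ∧
      ∑ j : Fin s, 2 * ((starRingEnd ℂ) (φ 0) * φ j.succ).re * x j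
        = Real.sqrt (∑ j : Fin s, x j ^ 2) := by
  set T := ∑ j : Fin s, x j ^ 2 with hT
  have hT0 : 0 ≤ T := Finset.sum_nonneg fun j _ => sq_nonneg _
  set N := Real.sqrt T with hN
  by_cases hN0 : N = 0
  · refine ⟨fun a => if a = 0 then 1 else 0, ?_, ?_⟩
    · simp [Fin.sum_univ_succ, Fin.succ_ne_zero]
    · simp [Fin.succ_ne_zero, hN0]
  · have hNpos : 0 < N := lt_of_le_of_ne (Real.sqrt_nonneg _) (Ne.symm hN0)
    have hN2 : N ^ 2 = T := Real.sq_sqrt hT0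
    have hTpos : 0 < T := by rw [← hN2]; positivity
    have h2 : Real.sqrt 2 ^ 2 = 2 := Real.sq_sqrt (by norm_num)
    have h2pos : (0:ℝ) < Real.sqrt 2 := Real.sqrt_pos.mpr (by norm_num)
    refine ⟨fun a => Fin.cases (((Real.sqrt 2)⁻¹ : ℝ) : ℂ)
      (fun j => ((x j / (Real.sqrt 2 * N) : ℝ) : ℂ)) a, ?_, ?_⟩
    · rw [Fin.sum_univ_succ]
      simp only [Fin.cases_zero, Fin.cases_succ, Complex.norm_real, Real.norm_eq_abs, sq_abs, div_pow, mul_pow,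
        h2, hN2]
      rw [← Finset.sum_div, ← hT]
      field_simp
      rw [h2]; norm_num
    · simp only [Fin.cases_zero, Fin.cases_succ, ← Complex.ofReal_mul, map_ofNat]
      have : ∀ j : Fin s, 2 * ((starRingEnd ℂ) (((Real.sqrt 2)⁻¹ : ℝ) : ℂ)
          * ((x j / (Real.sqrt 2 * N) : ℝ) : ℂ)).re * x j = x j ^ 2 / N := by
        intro j
        rw [Complex.conj_ofReal, ← Complex.ofReal_mul, Complex.ofReal_re]
        field_simp
        have hm : Real.sqrt 2 * Real.sqrt 2 = 2 := Real.mul_self_sqrt (by norm_num)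
        rw [h2]
      rw [Finset.sum_congr rfl fun j _ => this j, ← Finset.sum_div, ← hT, hN2.symm]
      field_simp

lemma stmt16_x_bound (d : ℕ) (B : Matrix (Fin d) (Fin d) ℂ) (ψ : Fin d → ℂ)
    (hψ : (∑ i, ‖ψ i‖ ^ 2) = 1) :
    |(star ψ ⬝ᵥ (B *ᵥ ψ)).re| ≤ ∑ i, ∑ k, ‖B i k‖ := by
  have habs : ∀ i, ‖ψ i‖ ≤ 1 := by
    intro i
    have h1 : ‖ψ i‖ ^ 2 ≤ 1 := by
      rw [← hψ]
      exact Finset.single_le_sum (f := fun k => ‖ψ k‖ ^ 2)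
        (fun k _ => sq_nonneg _) (Finset.mem_univ i)
    nlinarith [norm_nonneg (ψ i)]
  calc |(star ψ ⬝ᵥ (B *ᵥ ψ)).re| ≤ ‖star ψ ⬝ᵥ (B *ᵥ ψ)‖ :=
        Complex.abs_re_le_norm _
    _ ≤ ∑ i, ‖ψ i‖ * ‖(B *ᵥ ψ) i‖ := by
        refine le_trans (norm_sum_le _ _) ?_
        refine Finset.sum_le_sum fun i _ => ?_
        rw [Pi.star_apply, norm_mul]
        simp [RCLike.star_def, Complex.norm_conj]
    _ ≤ ∑ i, 1 * ∑ k, ‖B i k‖ := by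
        refine Finset.sum_le_sum fun i _ => ?_
        have h2 : ‖(B *ᵥ ψ) i‖ ≤ ∑ k, ‖B i k‖ := by
          refine le_trans (norm_sum_le Finset.univ fun k => B i k * ψ k) ?_
          refine Finset.sum_le_sum fun k _ => ?_
          rw [norm_mul]
          calc ‖B i k‖ * ‖ψ k‖
              ≤ ‖B i k‖ * 1 :=
                mul_le_mul_of_nonneg_left (habs k) (norm_nonneg _)
            _ = ‖B i k‖ := mul_one _
        calc ‖ψ i‖ * ‖(B *ᵥ ψ) i‖
            ≤ 1 * ‖(B *ᵥ ψ) i‖ :=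
              mul_le_mul_of_nonneg_right (habs i) (norm_nonneg _)
          _ ≤ 1 * ∑ k, ‖B i k‖ := by
              rw [one_mul, one_mul]; exact h2
    _ = ∑ i, ∑ k, ‖B i k‖ := by simp

/-- With `H = ∑_j (E_{0j} + E_{j0}) ⊗ B_j` for Hermitian `B_j`, the supremum over unit
vectors `φ ∈ ℂ^{s+1}`, `ψ ∈ ℂ^d` of `⟨φ ⊗ ψ, H (φ ⊗ ψ)⟩` equals the supremum over unit
vectors `ψ ∈ ℂ^d` of `√(∑_j ⟨ψ, B_j ψ⟩²)`. -/
theorem stmt_16 (s d : ℕ) (B : Fin s → Matrix (Fin d) (Fin d) ℂ)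
    (hB : ∀ j, (B j).IsHermitian) :
    sSup {r : ℝ | ∃ (φ : Fin (s + 1) → ℂ) (ψ : Fin d → ℂ),
        (∑ a, ‖φ a‖ ^ 2) = 1 ∧ (∑ i, ‖ψ i‖ ^ 2) = 1 ∧
        r = (star (fun p : Fin (s + 1) × Fin d => φ p.1 * ψ p.2) ⬝ᵥ
          ((∑ j : Fin s,
              (Matrix.single (0 : Fin (s + 1)) j.succ (1 : ℂ)
                + Matrix.single j.succ 0 1) ⊗ₖ B j)
            *ᵥ fun p : Fin (s + 1) × Fin d => φ p.1 * ψ p.2)).re}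
      = sSup {r : ℝ | ∃ ψ : Fin d → ℂ, (∑ i, ‖ψ i‖ ^ 2) = 1 ∧
          r = Real.sqrt (∑ j : Fin s, ((star ψ ⬝ᵥ (B j *ᵥ ψ)).re) ^ 2)} := by
  classical
  set S1 := {r : ℝ | ∃ (φ : Fin (s + 1) → ℂ) (ψ : Fin d → ℂ),
        (∑ a, ‖φ a‖ ^ 2) = 1 ∧ (∑ i, ‖ψ i‖ ^ 2) = 1 ∧
        r = (star (fun p : Fin (s + 1) × Fin d => φ p.1 * ψ p.2) ⬝ᵥ
          ((∑ j : Fin s,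
              (Matrix.single (0 : Fin (s + 1)) j.succ (1 : ℂ)
                + Matrix.single j.succ 0 1) ⊗ₖ B j)
            *ᵥ fun p : Fin (s + 1) × Fin d => φ p.1 * ψ p.2)).re} with hS1
  set S2 := {r : ℝ | ∃ ψ : Fin d → ℂ, (∑ i, ‖ψ i‖ ^ 2) = 1 ∧
          r = Real.sqrt (∑ j : Fin s, ((star ψ ⬝ᵥ (B j *ᵥ ψ)).re) ^ 2)} with hS2
  -- the uniform bound
  set M : ℝ := Real.sqrt (∑ j : Fin s, (∑ i, ∑ k, ‖B j i k‖) ^ 2) with hM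
  have hsq_bound : ∀ ψ : Fin d → ℂ, (∑ i, ‖ψ i‖ ^ 2) = 1 →
      Real.sqrt (∑ j : Fin s, ((star ψ ⬝ᵥ (B j *ᵥ ψ)).re) ^ 2) ≤ M := by
    intro ψ hψ
    apply Real.sqrt_le_sqrt
    refine Finset.sum_le_sum fun j _ => ?_
    have h1 := stmt16_x_bound d (B j) ψ hψ
    have h2 : (0:ℝ) ≤ ∑ i, ∑ k, ‖B j i k‖ :=
      Finset.sum_nonneg fun i _ => Finset.sum_nonneg fun k _ => norm_nonneg _
    exact sq_le_sq' (by linarith [(abs_le.mp h1).1]) (abs_le.mp h1).2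
  have hb2 : BddAbove S2 := by
    refine ⟨M, fun r hr => ?_⟩
    obtain ⟨ψ, hψ, rfl⟩ := hr
    exact hsq_bound ψ hψ
  have hS21 : S2 ⊆ S1 := by
    rintro r ⟨ψ, hψ, rfl⟩
    obtain ⟨φ, hφ, hval⟩ := stmt16_achieve s (fun j => (star ψ ⬝ᵥ (B j *ᵥ ψ)).re)
    exact ⟨φ, ψ, hφ, hψ, by rw [stmt16_quad_eval s d B hB φ ψ, hval]⟩
  by_cases hEx : ∃ ψ0 : Fin d → ℂ, (∑ i, ‖ψ0 i‖ ^ 2) = 1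
  · obtain ⟨ψ0, hψ0⟩ := hEx
    have hne2 : S2.Nonempty :=
      ⟨Real.sqrt (∑ j : Fin s, ((star ψ0 ⬝ᵥ (B j *ᵥ ψ0)).re) ^ 2), ψ0, hψ0, rfl⟩
    have hne1 : S1.Nonempty := hne2.mono hS21
    have hb1 : BddAbove S1 := by
      refine ⟨M, fun r hr => ?_⟩
      obtain ⟨φ, ψ, hφ, hψ, rfl⟩ := hr
      rw [stmt16_quad_eval s d B hB φ ψ]
      exact le_trans (stmt16_upper_bound s _ φ hφ) (hsq_bound ψ hψ)
    apply le_antisymm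
    · refine csSup_le hne1 fun r hr => ?_
      obtain ⟨φ, ψ, hφ, hψ, rfl⟩ := hr
      rw [stmt16_quad_eval s d B hB φ ψ]
      refine le_trans (stmt16_upper_bound s _ φ hφ) ?_
      exact le_csSup hb2 ⟨ψ, hψ, rfl⟩
    · exact csSup_le_csSup hb1 hne2 hS21
  · have h1 : S1 = ∅ := by
      ext r
      simp only [hS1, Set.mem_setOf_eq, Set.mem_empty_iff_false, iff_false]
      rintro ⟨φ, ψ, _, hψ, _⟩
      exact hEx ⟨ψ, hψ⟩
    have h2 : S2 = ∅ := by
      ext r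
      simp only [hS2, Set.mem_setOf_eq, Set.mem_empty_iff_false, iff_false]
      rintro ⟨ψ, hψ, _⟩
      exact hEx ⟨ψ, hψ⟩
    rw [h1, h2]
end

section
/- For n ≥ 2, let H be the Hermitian matrix H = Σ_{1≤j<l≤n} (E_{0,(j,l)} + E_{(j,l),0}) ⊗ B_{jl} built from the n(n−1)/2 matrices B_{jl} (so H acts on ℂ^{(s+1)n} with s = n(n−1)/2). Then the matrix (1/2)·I + (1/(3n))·H is positive semidefinite and its operator norm is strictly less than 1. -/
open Matrix Kronecker ComplexOrder

namespace Stmt18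
open scoped Matrix.Norms.L2Operator

abbrev Idx (n : ℕ) := {p : Fin n × Fin n // p.1 < p.2}

noncomputable def B (n : ℕ) (p : Idx n) : Matrix (Fin n) (Fin n) ℂ :=
  Matrix.single p.1.1 p.1.2 1 + Matrix.single p.1.2 p.1.1 1

lemma cT_std {m k : Type*} [DecidableEq m] [DecidableEq k] (i : m) (j : k) :
    (single i j (1:ℂ))ᴴ = single j i 1 := by
  ext a b
  simp [Matrix.single, Matrix.conjTranspose_apply, and_comm, apply_ite]

lemma cT_kron {m k : Type*} [DecidableEq m] [DecidableEq k] [Fintype m] [Fintype k]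
    (A : Matrix m m ℂ) (C : Matrix k k ℂ) : (A ⊗ₖ C)ᴴ = Aᴴ ⊗ₖ Cᴴ := by
  ext ⟨i,a⟩ ⟨j,b⟩
  simp [Matrix.conjTranspose_apply, star_mul']

lemma B_herm (n : ℕ) (p : Idx n) : (B n p)ᴴ = B n p := by
  simp [B, conjTranspose_add, cT_std, add_comm]

lemma B_mul_self (n : ℕ) (p : Idx n) :
    B n p * B n p = single p.1.1 p.1.1 1 + single p.1.2 p.1.2 1 := by
  have h : p.1.1 ≠ p.1.2 := ne_of_lt p.2
  simp [B, add_mul, mul_add, h, h.symm]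
  exact add_comm _ _

lemma proj_norm_le (n : ℕ) (p : Idx n) :
    ‖(single (none : Option (Idx n)) (none : Option (Idx n)) (1:ℂ))
      ⊗ₖ (B n p * B n p)‖ ≤ 1 := by
  set P := (single (none : Option (Idx n)) (none : Option (Idx n)) (1:ℂ))
      ⊗ₖ (B n p * B n p) with hP
  have h : p.1.1 ≠ p.1.2 := ne_of_lt p.2
  have hherm : Pᴴ = P := by
    rw [hP, cT_kron, cT_std, B_mul_self, conjTranspose_add, cT_std, cT_std, add_comm]
  have hidem : P * P = P := by
    rw [hP, ← Matrix.mul_kronecker_mul, Matrix.single_mul_single_same, B_mul_self]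
    simp [add_mul, mul_add, h, h.symm, add_comm]
  have key : ‖P‖ * ‖P‖ = ‖P‖ := by
    conv_lhs => rw [← Matrix.l2_opNorm_conjTranspose_mul_self P]
    rw [hherm, hidem]
  nlinarith [norm_nonneg P]

noncomputable def Mder (n : ℕ) : Matrix (Option (Idx n) × Fin n) (Option (Idx n) × Fin n) ℂ :=
  ∑ p : Idx n, single (none : Option (Idx n)) (some p) (1:ℂ) ⊗ₖ B n p

lemma Mder_cT (n : ℕ) : (Mder n)ᴴ =
    ∑ p : Idx n, single (some p) (none : Option (Idx n)) (1:ℂ) ⊗ₖ B n p := by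
  rw [Mder, Matrix.conjTranspose_sum]
  refine Finset.sum_congr rfl fun p _ => ?_
  rw [cT_kron, cT_std, B_herm]

lemma Mder_mul_cT (n : ℕ) : Mder n * (Mder n)ᴴ =
    ∑ p : Idx n, single (none : Option (Idx n)) (none : Option (Idx n)) (1:ℂ)
      ⊗ₖ (B n p * B n p) := by
  rw [Mder_cT, Mder, Finset.sum_mul_sum]
  refine Finset.sum_congr rfl fun p _ => ?_
  rw [Finset.sum_eq_single p]
  · rw [← Matrix.mul_kronecker_mul, Matrix.single_mul_single_same, one_mul]
  · intro q _ hq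
    have : (some p : Option (Idx n)) ≠ some q := fun hc => hq (Option.some_injective _ hc).symm
    rw [← Matrix.mul_kronecker_mul, Matrix.single_mul_single_of_ne (h := this),
      Matrix.zero_kronecker]
  · intro hc
    exact absurd (Finset.mem_univ p) hc

lemma norm_Mder_le (n : ℕ) : ‖Mder n‖ ≤ Real.sqrt (Fintype.card (Idx n)) := by
  have h1 : ‖Mder n * (Mder n)ᴴ‖ ≤ (Fintype.card (Idx n) : ℝ) := by
    rw [Mder_mul_cT]
    calc ‖∑ p : Idx n, single (none : Option (Idx n)) (none : Option (Idx n)) (1:ℂ)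
        ⊗ₖ (B n p * B n p)‖
        ≤ ∑ p : Idx n, ‖single (none : Option (Idx n)) (none : Option (Idx n)) (1:ℂ)
        ⊗ₖ (B n p * B n p)‖ := norm_sum_le _ _
      _ ≤ ∑ _p : Idx n, (1:ℝ) := Finset.sum_le_sum fun p _ => proj_norm_le n p
      _ = (Fintype.card (Idx n) : ℝ) := by simp
  have h2 : ‖Mder n‖ * ‖Mder n‖ = ‖Mder n * (Mder n)ᴴ‖ := by
    have := Matrix.l2_opNorm_conjTranspose_mul_self (Mder n)ᴴ
    rw [conjTranspose_conjTranspose, Matrix.l2_opNorm_conjTranspose] at this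
    exact this.symm
  rw [Real.le_sqrt (norm_nonneg _) (by positivity)]
  nlinarith [norm_nonneg (Mder n)]

lemma card_Idx (n : ℕ) : 2 * Fintype.card (Idx n) ≤ n ^ 2 := by
  classical
  have hinj : Function.Injective
      (Sum.elim (fun p : Idx n => p.1) (fun p : Idx n => ((p.1.2, p.1.1) : Fin n × Fin n))) := by
    rintro (p | p) (q | q) h <;> simp only [Sum.elim_inl, Sum.elim_inr] at h
    · exact congrArg Sum.inl (Subtype.ext h)
    · exfalso
      obtain ⟨h1, h2⟩ := Prod.ext_iff.mp h
      have hp := p.2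
      rw [h1, h2] at hp
      exact absurd q.2 (asymm hp)
    · exfalso
      obtain ⟨h1, h2⟩ := Prod.ext_iff.mp h
      simp only at h1 h2
      have hp := p.2
      rw [h2, h1] at hp
      exact absurd q.2 (asymm hp)
    · obtain ⟨h1, h2⟩ := Prod.ext_iff.mp h
      simp only at h1 h2
      exact congrArg Sum.inr (Subtype.ext (Prod.ext h2 h1))
  have := Fintype.card_le_of_injective _ hinj
  simpa [two_mul, sq] using this

noncomputable def Hm (n : ℕ) : Matrix (Option (Idx n) × Fin n) (Option (Idx n) × Fin n) ℂ :=
  ∑ p : Idx n,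
    (Matrix.single (none : Option (Idx n)) (some p) (1 : ℂ)
      + Matrix.single (some p) none 1) ⊗ₖ
      (Matrix.single p.1.1 p.1.2 (1 : ℂ) + Matrix.single p.1.2 p.1.1 1)

lemma Hm_eq (n : ℕ) : Hm n = Mder n + (Mder n)ᴴ := by
  rw [Mder_cT, Mder, ← Finset.sum_add_distrib]
  refine Finset.sum_congr rfl fun p _ => ?_
  rw [Matrix.add_kronecker]
  rfl

lemma Hm_herm (n : ℕ) : (Hm n)ᴴ = Hm n := by
  rw [Hm_eq, conjTranspose_add, conjTranspose_conjTranspose, add_comm]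

lemma norm_Hm_le (n : ℕ) (hn : 2 ≤ n) : ‖Hm n‖ ≤ 1.42 * n := by
  have hcard : Real.sqrt (Fintype.card (Idx n)) ≤ 0.71 * n := by
    have h := card_Idx n
    have h2 : (Fintype.card (Idx n) : ℝ) ≤ (0.71 * n)^2 := by
      have h3 : (2 * Fintype.card (Idx n) : ℝ) ≤ (n:ℝ)^2 := by exact_mod_cast h
      nlinarith [h3]
    calc Real.sqrt (Fintype.card (Idx n)) ≤ Real.sqrt ((0.71 * n)^2) := Real.sqrt_le_sqrt h2
      _ = 0.71 * n := Real.sqrt_sq (by positivity)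
  have hM := norm_Mder_le n
  calc ‖Hm n‖ = ‖Mder n + (Mder n)ᴴ‖ := by rw [Hm_eq]
    _ ≤ ‖Mder n‖ + ‖(Mder n)ᴴ‖ := norm_add_le _ _
    _ = 2 * ‖Mder n‖ := by rw [Matrix.l2_opNorm_conjTranspose]; ring
    _ ≤ 2 * Real.sqrt (Fintype.card (Idx n)) := by linarith
    _ ≤ 1.42 * n := by linarith

/-- General fact: if `A` is Hermitian and `c ⬝ ‖A‖ ≤ 1/2` with `c ≥ 0`, then
`(1/2) • 1 + c • A` is positive semidefinite. -/
lemma psd_aux {m : Type*} [Fintype m] [DecidableEq m] (A : Matrix m m ℂ) (hA : Aᴴ = A)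
    (c : ℝ) (hc : 0 ≤ c) (hbound : c * ‖A‖ ≤ 1/2) :
    ((1/2:ℂ) • 1 + ((c:ℂ)) • A).PosSemidef := by
  refine Matrix.PosSemidef.of_dotProduct_mulVec_nonneg ?_ ?_
  · show ((1/2:ℂ) • 1 + ((c:ℂ)) • A)ᴴ = _
    rw [conjTranspose_add, Matrix.conjTranspose_smul, Matrix.conjTranspose_smul,
      conjTranspose_one, hA, Complex.star_def, Complex.conj_ofReal]
    norm_num [map_ofNat, one_div]
  intro x
  have expand : dotProduct (star x) (((1/2:ℂ) • 1 + ((c:ℂ)) • A) *ᵥ x)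
      = (1/2:ℂ) * dotProduct (star x) x + (c:ℂ) * dotProduct (star x) (A *ᵥ x) := by
    rw [Matrix.add_mulVec, Matrix.smul_mulVec, Matrix.smul_mulVec,
      Matrix.one_mulVec, dotProduct_add]
    simp [smul_eq_mul, dotProduct_smul]
  have hadj : ContinuousLinearMap.adjoint (toEuclideanCLM (𝕜:=ℂ) A)
      = toEuclideanCLM (𝕜:=ℂ) A := by
    rw [← ContinuousLinearMap.star_eq_adjoint, ← map_star, Matrix.star_eq_conjTranspose, hA]
  obtain ⟨y, hy⟩ : ∃ y : EuclideanSpace ℂ m, WithLp.toLp 2 x = y := ⟨_, rfl⟩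
  obtain ⟨t, ht⟩ : ∃ t : ℂ, inner ℂ y (toEuclideanCLM (𝕜:=ℂ) A y) = t := ⟨_, rfl⟩
  have hx : dotProduct (star x) x = (‖y‖:ℂ)^2 := by
    rw [dotProduct_comm, ← EuclideanSpace.inner_toLp_toLp, hy, inner_self_eq_norm_sq_to_K]
    rfl
  have hHx : dotProduct (star x) (A *ᵥ x) = t := by
    rw [← ht, ← hy, Matrix.toEuclideanCLM_toLp, EuclideanSpace.inner_toLp_toLp, dotProduct_comm]
  have hconj : (starRingEnd ℂ) t = t := by
    rw [← ht, inner_conj_symm]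
    conv_lhs => rw [← hadj]
    rw [ContinuousLinearMap.adjoint_inner_left]
  have htre : ((t.re : ℂ)) = t := Complex.conj_eq_iff_re.mp hconj
  have habs : |t.re| ≤ ‖A‖ * ‖y‖^2 := by
    calc |t.re| ≤ ‖t‖ := Complex.abs_re_le_norm t
      _ = ‖t‖ := rfl
      _ = ‖inner ℂ y (toEuclideanCLM (𝕜:=ℂ) A y)‖ := by rw [ht]
      _ ≤ ‖y‖ * ‖toEuclideanCLM (𝕜:=ℂ) A y‖ := norm_inner_le_norm _ _
      _ ≤ ‖y‖ * (‖toEuclideanCLM (𝕜:=ℂ) A‖ * ‖y‖) := by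
          gcongr
          exact (toEuclideanCLM (𝕜:=ℂ) A).le_opNorm y
      _ = ‖A‖ * ‖y‖^2 := by rw [Matrix.cstar_norm_def]; ring
  rw [expand, hx, hHx, ← htre]
  have heq : (1/2:ℂ) * (‖y‖:ℂ)^2 + (c:ℂ) * (t.re:ℂ)
      = (((1/2) * ‖y‖^2 + c * t.re : ℝ) : ℂ) := by push_cast; ring
  rw [heq, Complex.zero_le_real]
  have h1 : -(‖A‖ * ‖y‖^2) ≤ t.re := neg_le_of_abs_le habs
  have h2 : c * -(‖A‖ * ‖y‖^2) ≤ c * t.re := mul_le_mul_of_nonneg_left h1 hc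
  nlinarith [sq_nonneg ‖y‖, norm_nonneg A, mul_nonneg hc (norm_nonneg A)]

/-- General fact: if `c ⬝ ‖A‖ < 1/2` with `c ≥ 0`, then `(1/2) • 1 + c • A` has operator
norm strictly less than one. -/
lemma norm_aux {m : Type*} [Fintype m] [DecidableEq m] [Nonempty m] (A : Matrix m m ℂ)
    (c : ℝ) (hc : 0 ≤ c) (h : c * ‖A‖ < 1/2) :
    matOpNorm ((1/2:ℂ) • 1 + ((c:ℂ)) • A) < 1 := by
  haveI : Nontrivial (EuclideanSpace ℂ m) := by
    apply Module.nontrivial_of_finrank_pos (R := ℂ)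
    rw [finrank_euclideanSpace]
    exact Fintype.card_pos
  have h1 : ‖(1 : Matrix m m ℂ)‖ = 1 := by
    rw [Matrix.cstar_norm_def, _root_.map_one]; exact norm_one
  have heq : matOpNorm ((1/2:ℂ) • 1 + ((c:ℂ)) • A)
      = ‖(1/2:ℂ) • (1 : Matrix m m ℂ) + ((c:ℂ)) • A‖ := rfl
  rw [heq]
  calc ‖(1/2:ℂ) • (1 : Matrix m m ℂ) + ((c:ℂ)) • A‖
      ≤ ‖(1/2:ℂ) • (1 : Matrix m m ℂ)‖ + ‖((c:ℂ)) • A‖ := norm_add_le _ _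
    _ = ‖(1/2:ℂ)‖ * ‖(1 : Matrix m m ℂ)‖ + ‖((c:ℂ))‖ * ‖A‖ := by rw [norm_smul, norm_smul]
    _ = 1/2 + c * ‖A‖ := by
        rw [h1, Complex.norm_real, Real.norm_of_nonneg hc]
        norm_num
    _ < 1 := by linarith

lemma c_lt (n : ℕ) (hn : 2 ≤ n) : (1/(3*(n:ℝ))) * ‖Hm n‖ < 1/2 := by
  have hn0 : (0:ℝ) < n := by positivity
  have hH := norm_Hm_le n hn
  have hHnn : 0 ≤ ‖Hm n‖ := norm_nonneg _
  have hc0 : 0 < 1/(3*(n:ℝ)) := by positivity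
  calc (1/(3*(n:ℝ))) * ‖Hm n‖ ≤ (1/(3*(n:ℝ))) * (1.42 * n) := by
        exact mul_le_mul_of_nonneg_left hH (le_of_lt hc0)
    _ = 1.42/3 := by field_simp
    _ < 1/2 := by norm_num

end Stmt18

/-- For `n ≥ 2`, let `H = ∑_{j<l} (E_{0,(j,l)} + E_{(j,l),0}) ⊗ B_{jl}` be the block
arrowhead matrix built from the `n(n−1)/2` matrices `B_{jl}`. Then `(1/2)·I + (1/(3n))·H`
is positive semidefinite with operator norm strictly less than `1`. -/
theorem stmt_18 (n : ℕ) (hn : 2 ≤ n) :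
    ((1 / 2 : ℂ) • (1 : Matrix (Option {p : Fin n × Fin n // p.1 < p.2} × Fin n)
          (Option {p : Fin n × Fin n // p.1 < p.2} × Fin n) ℂ)
        + (1 / (3 * n) : ℂ) •
          ∑ p : {p : Fin n × Fin n // p.1 < p.2},
            (Matrix.single (none : Option {p : Fin n × Fin n // p.1 < p.2})
                (some p) (1 : ℂ)
              + Matrix.single (some p) none 1) ⊗ₖ
              (Matrix.single p.1.1 p.1.2 (1 : ℂ)
                + Matrix.single p.1.2 p.1.1 1)).PosSemidef
    ∧ matOpNorm
        ((1 / 2 : ℂ) • (1 : Matrix (Option {p : Fin n × Fin n // p.1 < p.2} × Fin n)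
            (Option {p : Fin n × Fin n // p.1 < p.2} × Fin n) ℂ)
          + (1 / (3 * n) : ℂ) •
            ∑ p : {p : Fin n × Fin n // p.1 < p.2},
              (Matrix.single (none : Option {p : Fin n × Fin n // p.1 < p.2})
                  (some p) (1 : ℂ)
                + Matrix.single (some p) none 1) ⊗ₖ
                (Matrix.single p.1.1 p.1.2 (1 : ℂ)
                  + Matrix.single p.1.2 p.1.1 1)) < 1 := by
  classical
  have hsum : (∑ p : {p : Fin n × Fin n // p.1 < p.2},
      (Matrix.single (none : Option {p : Fin n × Fin n // p.1 < p.2})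
          (some p) (1 : ℂ)
        + Matrix.single (some p) none 1) ⊗ₖ
        (Matrix.single p.1.1 p.1.2 (1 : ℂ)
          + Matrix.single p.1.2 p.1.1 1)) = Stmt18.Hm n := rfl
  have hcast : (1 / (3 * (n:ℂ)) : ℂ) = (((1/(3*(n:ℝ)) : ℝ)) : ℂ) := by push_cast; ring
  rw [hsum, hcast]
  have hlt := Stmt18.c_lt n hn
  have hc0 : (0:ℝ) ≤ 1/(3*(n:ℝ)) := by positivity
  haveI : Nonempty (Option (Stmt18.Idx n) × Fin n) := ⟨(none, ⟨0, by omega⟩)⟩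
  exact ⟨Stmt18.psd_aux (Stmt18.Hm n) (Stmt18.Hm_herm n) _ hc0 (le_of_lt hlt),
    Stmt18.norm_aux (Stmt18.Hm n) _ hc0 hlt⟩
end
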